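/- arXiv:1506.08204 — 6 statements merged into one kernel-verified Lean document; each statement's English description precedes it below -/
import Mathlib

section
/- For every n×n symmetric diagonally dominant matrix M and every real α ≥ 0, there exists a subset F of the indices {1,…,n} with |F| ≥ n/(8(1+α)) such that the principal submatrix M_{FF} is α-strongly diagonally dominant. -/
open Matrix BigOperators Finset
open scoped Classical

noncomputable section

/-- Loewner order: `PSDLE A B` means `A ⪯ B`, i.e. `B - A` is positive semidefinite. -/
def PSDLE {n : Type*} [Fintype n] (A B : Matrix n n ℝ) : Prop :=
  (B - A).PosSemidef

/-- `ApproxEps A ε B` means `A ≈_ε B`, i.e. `e^ε • B ⪰ A ⪰ e^{-ε} • B`. -/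
def ApproxEps {n : Type*} [Fintype n] (A : Matrix n n ℝ) (ε : ℝ) (B : Matrix n n ℝ) : Prop :=
  PSDLE A (Real.exp ε • B) ∧ PSDLE (Real.exp (-ε) • B) A

/-- `M` is α-strongly diagonally dominant:
`M_{ii} ≥ (1+α)·Σ_{j≠i} |M_{ij}|` for every `i`. -/
def IsStronglyDD {n : Type*} [Fintype n] [DecidableEq n] (α : ℝ) (M : Matrix n n ℝ) : Prop :=
  ∀ i, (1 + α) * ∑ j ∈ Finset.univ.erase i, |M i j| ≤ M i i

/-- A Laplacian matrix: symmetric, nonpositive off-diagonal entries, zero row sums. -/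
def IsLaplacian {n : Type*} [Fintype n] (L : Matrix n n ℝ) : Prop :=
  L.IsSymm ∧ (∀ i j, i ≠ j → L i j ≤ 0) ∧ ∀ i, ∑ j, L i j = 0

/-- An SDDM matrix: symmetric positive definite, nonpositive off-diagonal entries,
and each diagonal entry at least the sum of absolute values of the off-diagonal
entries in its row. -/
def IsSDDM {n : Type*} [Fintype n] [DecidableEq n] (M : Matrix n n ℝ) : Prop :=
  M.IsSymm ∧ M.PosDef ∧ (∀ i j, i ≠ j → M i j ≤ 0) ∧
    ∀ i, ∑ j ∈ Finset.univ.erase i, |M i j| ≤ M i i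

/-- For every n×n symmetric diagonally dominant matrix `M` and every
real `α ≥ 0`, there exists a subset `F` of the indices with `|F| ≥ n/(8(1+α))`
such that the principal submatrix `M_FF` is α-strongly diagonally dominant. -/
theorem sdd_subset_exists (n : ℕ) (M : Matrix (Fin n) (Fin n) ℝ) (α : ℝ)
    (hsym : M.IsSymm)
    (hdd : ∀ i, ∑ j ∈ Finset.univ.erase i, |M i j| ≤ M i i)
    (hα : 0 ≤ α) :
    ∃ F : Finset (Fin n),
      (n : ℝ) / (8 * (1 + α)) ≤ (F.card : ℝ) ∧
      IsStronglyDD α (M.submatrix (fun i : F => (i : Fin n)) (fun j : F => (j : Fin n))) := by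
  classical
  have hA : (0:ℝ) < 1 + α := by linarith
  set t : ℕ := ⌈2 * (1 + α)⌉₊ with ht_def
  have htR : 2 * (1 + α) ≤ (t : ℝ) := Nat.le_ceil _
  have ht2 : (2:ℝ) ≤ t := by linarith
  have ht0 : 0 < t := by exact_mod_cast lt_of_lt_of_le two_pos ht2
  have ht0R : (0:ℝ) < t := by exact_mod_cast ht0
  have htub : (t : ℝ) ≤ 4 * (1 + α) := by
    have h1 : (t:ℝ) < 2 * (1 + α) + 1 :=
      Nat.ceil_lt_add_one (by positivity)
    nlinarith
  -- the internal row mass of row i within the color class of i under coloring f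
  set S : (Fin n → Fin t) → Fin n → ℝ := fun f i =>
    ∑ j ∈ (Finset.univ.erase i).filter (fun j => f j = f i), |M i j| with hS_def
  have hSnonneg : ∀ f i, 0 ≤ S f i := fun f i =>
    Finset.sum_nonneg fun j _ => abs_nonneg _
  have hMnonneg : ∀ i, 0 ≤ M i i := fun i =>
    le_trans (Finset.sum_nonneg fun j _ => abs_nonneg _) (hdd i)
  have hSle : ∀ f i, S f i ≤ M i i := fun f i =>
    le_trans (Finset.sum_le_sum_of_subset_of_nonneg (Finset.filter_subset _ _)
      (fun j _ _ => abs_nonneg _)) (hdd i)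
  -- counting: for j ≠ i, at most t^(n-1) colorings have f j = f i
  have hcount : ∀ i j : Fin n, j ≠ i →
      ((Finset.univ.filter (fun f : Fin n → Fin t => f j = f i)).card : ℝ)
        ≤ (t:ℝ)^(n-1) := by
    intro i j hji
    have hcard : (Finset.univ.filter (fun f : Fin n → Fin t => f j = f i)).card
        ≤ Fintype.card ({x : Fin n // x ≠ j} → Fin t) := by
      rw [← Finset.card_univ]
      apply Finset.card_le_card_of_injOn (fun f (x : {x : Fin n // x ≠ j}) => f x.1)
        (fun _ _ => Finset.mem_univ _)
      intro f hf g hg hfg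
      simp only [Finset.coe_filter, Set.mem_setOf_eq, Finset.mem_univ, true_and] at hf hg
      funext x
      by_cases hx : x = j
      · subst hx
        have hi : f i = g i := congrFun hfg ⟨i, Ne.symm hji⟩
        rw [hf, hg, hi]
      · exact congrFun hfg ⟨x, hx⟩
    have hcard2 : Fintype.card ({x : Fin n // x ≠ j} → Fin t) = t ^ (n - 1) := by
      rw [Fintype.card_fun, Fintype.card_fin]
      congr 1
      have := Fintype.card_subtype_compl (p := fun x : Fin n => x = j)
      simp only [Fintype.card_subtype_eq, Fintype.card_fin] at this
      exact this
    calc ((Finset.univ.filter (fun f : Fin n → Fin t => f j = f i)).card : ℝ)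
        ≤ ((t ^ (n-1) : ℕ) : ℝ) := by exact_mod_cast hcard2 ▸ hcard
      _ = (t:ℝ)^(n-1) := by push_cast; ring
  -- average row mass
  have hrow : ∀ i : Fin n, ∑ f : Fin n → Fin t, S f i ≤ (t:ℝ)^(n-1) * M i i := by
    intro i
    have e1 : ∑ f : Fin n → Fin t, S f i
        = ∑ j ∈ Finset.univ.erase i, ∑ f : Fin n → Fin t,
            (if f j = f i then |M i j| else 0) := by
      rw [Finset.sum_comm]
      exact Finset.sum_congr rfl fun f _ => Finset.sum_filter _ _
    rw [e1]
    have e2 : ∀ j ∈ Finset.univ.erase i,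
        ∑ f : Fin n → Fin t, (if f j = f i then |M i j| else 0)
          ≤ (t:ℝ)^(n-1) * |M i j| := by
      intro j hj
      have hji : j ≠ i := Finset.ne_of_mem_erase hj
      rw [← Finset.sum_filter]
      rw [Finset.sum_const, nsmul_eq_mul]
      exact mul_le_mul_of_nonneg_right (hcount i j hji) (abs_nonneg _)
    calc ∑ j ∈ Finset.univ.erase i, ∑ f : Fin n → Fin t,
            (if f j = f i then |M i j| else 0)
        ≤ ∑ j ∈ Finset.univ.erase i, (t:ℝ)^(n-1) * |M i j| :=
          Finset.sum_le_sum e2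
      _ = (t:ℝ)^(n-1) * ∑ j ∈ Finset.univ.erase i, |M i j| := by
          rw [Finset.mul_sum]
      _ ≤ (t:ℝ)^(n-1) * M i i :=
          mul_le_mul_of_nonneg_left (hdd i) (by positivity)
  -- per-row Markov bound on number of bad colorings
  have hbadrow : ∀ i : Fin n,
      ((Finset.univ.filter (fun f : Fin n → Fin t => M i i / (1+α) < S f i)).card : ℝ)
        ≤ (1+α) * (t:ℝ)^(n-1) := by
    intro i
    by_cases hMi : M i i = 0
    · have hempty : (Finset.univ.filter
          (fun f : Fin n → Fin t => M i i / (1+α) < S f i)) = ∅ := by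
        apply Finset.filter_false_of_mem
        intro f _
        rw [hMi]
        simp only [zero_div, not_lt]
        calc S f i ≤ M i i := hSle f i
          _ = 0 := hMi
      rw [hempty]
      simp only [Finset.card_empty, Nat.cast_zero]
      positivity
    · have hMi' : 0 < M i i := lt_of_le_of_ne (hMnonneg i) (Ne.symm hMi)
      set B := Finset.univ.filter (fun f : Fin n → Fin t => M i i / (1+α) < S f i)
        with hB_def
      have h1 : (B.card : ℝ) * (M i i / (1+α)) ≤ ∑ f ∈ B, S f i := by
        have := Finset.card_nsmul_le_sum B (fun f => S f i) (M i i / (1+α))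
          (fun f hf => le_of_lt (Finset.mem_filter.mp hf).2)
        rwa [nsmul_eq_mul] at this
      have h2 : ∑ f ∈ B, S f i ≤ ∑ f : Fin n → Fin t, S f i :=
        Finset.sum_le_sum_of_subset_of_nonneg (Finset.subset_univ _)
          (fun f _ _ => hSnonneg f i)
      have h3 : (B.card : ℝ) * (M i i / (1+α)) ≤ (t:ℝ)^(n-1) * M i i :=
        le_trans (le_trans h1 h2) (hrow i)
      rw [div_eq_mul_inv] at h3
      have h4 : (B.card : ℝ) * M i i ≤ (1+α) * (t:ℝ)^(n-1) * M i i := by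
        have := mul_le_mul_of_nonneg_left h3 (le_of_lt hA)
        calc (B.card : ℝ) * M i i = (1+α) * ((B.card : ℝ) * (M i i * (1+α)⁻¹)) := by
              field_simp
          _ ≤ (1+α) * ((t:ℝ)^(n-1) * M i i) := this
          _ = (1+α) * (t:ℝ)^(n-1) * M i i := by ring
      exact le_of_mul_le_mul_right h4 hMi'
  -- bad set of a coloring
  set Bad : (Fin n → Fin t) → Finset (Fin n) := fun f =>
    Finset.univ.filter (fun i => M i i / (1+α) < S f i) with hBad_def
  have hsumbad : ∑ f : Fin n → Fin t, ((Bad f).card : ℝ)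
      ≤ (1+α) * (t:ℝ)^(n-1) * n := by
    have e1 : ∀ f : Fin n → Fin t, ((Bad f).card : ℝ)
        = ∑ i : Fin n, (if M i i / (1+α) < S f i then (1:ℝ) else 0) := by
      intro f
      rw [Finset.sum_boole]
    calc ∑ f : Fin n → Fin t, ((Bad f).card : ℝ)
        = ∑ f : Fin n → Fin t, ∑ i : Fin n,
            (if M i i / (1+α) < S f i then (1:ℝ) else 0) :=
          Finset.sum_congr rfl fun f _ => e1 f
      _ = ∑ i : Fin n, ∑ f : Fin n → Fin t,
            (if M i i / (1+α) < S f i then (1:ℝ) else 0) := Finset.sum_comm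
      _ = ∑ i : Fin n, ((Finset.univ.filter
            (fun f : Fin n → Fin t => M i i / (1+α) < S f i)).card : ℝ) :=
          Finset.sum_congr rfl fun i _ => Finset.sum_boole _ _
      _ ≤ ∑ _i : Fin n, (1+α) * (t:ℝ)^(n-1) :=
          Finset.sum_le_sum fun i _ => hbadrow i
      _ = (1+α) * (t:ℝ)^(n-1) * n := by
          rw [Finset.sum_const, nsmul_eq_mul, Finset.card_univ, Fintype.card_fin]; ring
  -- choose a good coloring
  obtain ⟨f₀, hf₀⟩ : ∃ f : Fin n → Fin t, ((Bad f).card : ℝ) ≤ (1+α) * n / t := by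
    by_contra h
    push_neg at h
    have : Nonempty (Fin n → Fin t) := ⟨fun _ => ⟨0, ht0⟩⟩
    have hne : (Finset.univ : Finset (Fin n → Fin t)).Nonempty :=
      Finset.univ_nonempty
    have hlt : ∑ _f : Fin n → Fin t, ((1+α) * n / t)
        < ∑ f : Fin n → Fin t, ((Bad f).card : ℝ) :=
      Finset.sum_lt_sum_of_nonempty hne fun f _ => h f
    have hconst : ∑ _f : Fin n → Fin t, ((1+α) * n / t)
        = (t:ℝ)^n * ((1+α) * n / t) := by
      rw [Finset.sum_const, nsmul_eq_mul, Finset.card_univ, Fintype.card_fun,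
        Fintype.card_fin, Fintype.card_fin]
      push_cast
      ring
    have heq : (t:ℝ)^n * ((1+α) * n / t) = (1+α) * (t:ℝ)^(n-1) * n := by
      rcases n with _ | m
      · simp
      · have : (t:ℝ)^(m+1) = (t:ℝ)^m * t := by ring
        rw [this]
        field_simp
        ring_nf; simp
    rw [hconst, heq] at hlt
    linarith [hsumbad]
  -- the good indices
  set Good : Finset (Fin n) := Finset.univ \ Bad f₀ with hGood_def
  have hGoodcard : (n:ℝ) - (1+α) * n / t ≤ (Good.card : ℝ) := by
    have h1 : Good.card = n - (Bad f₀).card := by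
      rw [hGood_def, Finset.card_sdiff_of_subset (Finset.subset_univ _), Finset.card_univ,
        Fintype.card_fin]
    have h2 : (Bad f₀).card ≤ n := by
      calc (Bad f₀).card ≤ (Finset.univ : Finset (Fin n)).card :=
            Finset.card_le_card (Finset.subset_univ _)
        _ = n := by rw [Finset.card_univ, Fintype.card_fin]
    have h3 : ((Good.card : ℝ)) = (n:ℝ) - ((Bad f₀).card : ℝ) := by
      rw [h1]
      push_cast [Nat.cast_sub h2]
      ring
    rw [h3]
    linarith
  have hGoodhalf : (n:ℝ)/2 ≤ (Good.card : ℝ) := by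
    have h1 : (1+α) * n / t ≤ (n:ℝ)/2 := by
      rw [div_le_div_iff₀ ht0R two_pos]
      have hn0 : (0:ℝ) ≤ n := Nat.cast_nonneg n
      nlinarith
    linarith
  -- pick the biggest color class among good indices
  obtain ⟨c, hc⟩ : ∃ c : Fin t,
      (Good.card : ℝ) ≤ t * ((Good.filter (fun i => f₀ i = c)).card : ℝ) := by
    by_contra h
    push_neg at h
    have hfib : Good.card = ∑ c : Fin t, (Good.filter (fun i => f₀ i = c)).card :=
      Finset.card_eq_sum_card_fiberwise fun x _ => Finset.mem_univ (f₀ x)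
    have hfibR : (Good.card : ℝ)
        = ∑ c : Fin t, ((Good.filter (fun i => f₀ i = c)).card : ℝ) := by
      rw [hfib]; push_cast; rfl
    have hne : (Finset.univ : Finset (Fin t)).Nonempty := by
      have : Nonempty (Fin t) := ⟨⟨0, ht0⟩⟩
      exact Finset.univ_nonempty
    have hlt : ∑ c : Fin t, ((Good.filter (fun i => f₀ i = c)).card : ℝ)
        < ∑ _c : Fin t, ((Good.card : ℝ) / t) := by
      apply Finset.sum_lt_sum_of_nonempty hne
      intro c _
      rw [lt_div_iff₀ ht0R]
      have := h c
      nlinarith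
    have hconst : ∑ _c : Fin t, ((Good.card : ℝ) / t) = (Good.card : ℝ) := by
      rw [Finset.sum_const, nsmul_eq_mul, Finset.card_univ, Fintype.card_fin]
      field_simp
    rw [hconst, ← hfibR] at hlt
    exact lt_irrefl _ hlt
  refine ⟨Good.filter (fun i => f₀ i = c), ?_, ?_⟩
  · -- cardinality bound
    set F := Good.filter (fun i => f₀ i = c) with hF_def
    have h1 : (n:ℝ)/2 ≤ t * (F.card : ℝ) := le_trans hGoodhalf hc
    have h2 : (n:ℝ) / (8 * (1+α)) ≤ (n:ℝ) / (2 * t) := by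
      apply div_le_div_of_nonneg_left (Nat.cast_nonneg n) (by positivity)
      nlinarith
    have h3 : (n:ℝ) / (2 * t) ≤ (F.card : ℝ) := by
      rw [div_le_iff₀ (by positivity)]
      nlinarith [Nat.cast_nonneg (α := ℝ) F.card]
    linarith
  · -- strong diagonal dominance
    intro i
    have hiF : (i : Fin n) ∈ Good.filter (fun i => f₀ i = c) := i.2
    rw [Finset.mem_filter] at hiF
    obtain ⟨hiGood, hic⟩ := hiF
    have hinotbad : S f₀ (i : Fin n) ≤ M (i : Fin n) (i : Fin n) / (1+α) := by
      have h2 : (i : Fin n) ∉ Bad f₀ := (Finset.mem_sdiff.mp hiGood).2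
      by_contra hcon
      push_neg at hcon
      exact h2 (Finset.mem_filter.mpr ⟨Finset.mem_univ _, hcon⟩)
    simp only [Matrix.submatrix_apply]
    have key : (∑ j ∈ Finset.univ.erase i, |M (i : Fin n) ((j : Fin n))|)
        ≤ S f₀ (i : Fin n) := by
      have e1 : ∑ j : {x // x ∈ Good.filter (fun i => f₀ i = c)},
          |M (i : Fin n) (j : Fin n)|
          = ∑ j ∈ Good.filter (fun i => f₀ i = c), |M (i : Fin n) j| :=
        Finset.sum_coe_sort (Good.filter (fun i => f₀ i = c))
          (fun j => |M (i : Fin n) j|)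
      rw [Finset.sum_erase_eq_sub (Finset.mem_univ i), e1,
        ← Finset.sum_erase_eq_sub i.2]
      simp only [hS_def]
      apply Finset.sum_le_sum_of_subset_of_nonneg
      · intro j hj
        rw [Finset.mem_erase] at hj
        obtain ⟨hji, hjF⟩ := hj
        rw [Finset.mem_filter] at hjF
        rw [Finset.mem_filter, Finset.mem_erase]
        exact ⟨⟨hji, Finset.mem_univ _⟩, by rw [hjF.2, hic]⟩
      · intro j _ _
        exact abs_nonneg _
    have final : (1+α) * S f₀ (i : Fin n) ≤ M (i : Fin n) (i : Fin n) := by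
      calc (1+α) * S f₀ (i : Fin n)
          ≤ (1+α) * (M (i : Fin n) (i : Fin n) / (1+α)) :=
            mul_le_mul_of_nonneg_left hinotbad hA.le
        _ = M (i : Fin n) (i : Fin n) := by field_simp
    exact le_trans (mul_le_mul_of_nonneg_left key hA.le) final
end
end

section
/- For every n×n symmetric diagonally dominant matrix M and every real α ≥ 0, there exists a subset F of the indices with |F| ≥ n/(16(1+α)) such that the principal submatrix M_{FF} is α-strongly diagonally dominant and, for every i ∈ F, the number of nonzero entries of the i-th column of M is at most 2m/n, where m is the total number of nonzero entries of M. -/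
open Matrix BigOperators Finset
open scoped Classical

noncomputable section


private lemma sum_erase_powersetCard {ι : Type*} [DecidableEq ι] (H : Finset ι) (s : ℕ)
    {i : ι} (hi : i ∈ H) (g : Finset ι → ℝ) :
    ∑ S ∈ (H.powersetCard (s+1)).filter (fun S => i ∈ S), g (S.erase i)
      = ∑ T ∈ (H.erase i).powersetCard s, g T := by
  refine Finset.sum_bij' (fun S _ => S.erase i) (fun T _ => insert i T) ?_ ?_ ?_ ?_ ?_
  · intro S hS
    simp only [Finset.mem_filter, Finset.mem_powersetCard] at hS
    obtain ⟨⟨hsub, hcard⟩, hiS⟩ := hS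
    rw [Finset.mem_powersetCard]
    constructor
    · intro x hx
      rw [Finset.mem_erase] at hx ⊢
      exact ⟨hx.1, hsub hx.2⟩
    · simp [Finset.card_erase_of_mem hiS, hcard]
  · intro T hT
    rw [Finset.mem_powersetCard] at hT
    have hiT : i ∉ T := fun h => (Finset.mem_erase.mp (hT.1 h)).1 rfl
    simp only [Finset.mem_filter, Finset.mem_powersetCard]
    refine ⟨⟨?_, ?_⟩, Finset.mem_insert_self _ _⟩
    · intro x hx
      rcases Finset.mem_insert.mp hx with rfl | hx
      · exact hi
      · exact Finset.mem_of_mem_erase (hT.1 hx)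
    · rw [Finset.card_insert_of_notMem hiT, hT.2]
  · intro S hS
    simp only [Finset.mem_filter] at hS
    exact Finset.insert_erase hS.2
  · intro T hT
    rw [Finset.mem_powersetCard] at hT
    have hiT : i ∉ T := fun h => (Finset.mem_erase.mp (hT.1 h)).1 rfl
    exact Finset.erase_insert hiT
  · intro S hS; rfl

private lemma card_filter_mem_powersetCard {ι : Type*} [DecidableEq ι] (H : Finset ι) (s : ℕ)
    {i : ι} (hi : i ∈ H) :
    ((((H.powersetCard (s+1)).filter (fun S => i ∈ S)).card : ℝ))
      = ((H.card - 1).choose s : ℕ) := by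
  have h1 := sum_erase_powersetCard H s hi (fun _ => (1:ℝ))
  simpa [Finset.sum_const, Finset.card_powersetCard, Finset.card_erase_of_mem hi] using h1

private lemma sum_swap_powerset {ι : Type*} [DecidableEq ι] (H : Finset ι) (k : ℕ)
    (f : ι → Finset ι → ℝ) :
    ∑ S ∈ H.powersetCard k, ∑ i ∈ S, f i S
      = ∑ i ∈ H, ∑ S ∈ (H.powersetCard k).filter (fun S => i ∈ S), f i S := by
  have L : ∀ S ∈ H.powersetCard k, ∑ i ∈ S, f i S = ∑ i ∈ H, if i ∈ S then f i S else 0 := by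
    intro S hS
    rw [Finset.sum_ite_mem, Finset.inter_eq_right.mpr (Finset.mem_powersetCard.mp hS).1]
  rw [Finset.sum_congr rfl L, Finset.sum_comm]
  exact Finset.sum_congr rfl fun i _ => (Finset.sum_filter _ _).symm

private lemma sum_powersetCard_sum {ι : Type*} [DecidableEq ι] (H : Finset ι) (t : ℕ)
    (a : ι → ℝ) :
    ∑ S ∈ H.powersetCard (t+1), ∑ j ∈ S, a j
      = (((H.card - 1).choose t : ℕ) : ℝ) * ∑ j ∈ H, a j := by
  rw [sum_swap_powerset H (t+1) (fun j _ => a j), Finset.mul_sum]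
  refine Finset.sum_congr rfl fun j hj => ?_
  rw [Finset.sum_const, nsmul_eq_mul, card_filter_mem_powersetCard H t hj]

/-- Core combinatorial lemma: inside any set `H` of indices of a diagonally dominant
"matrix" `M`, there is a subset `F` of size roughly `|H|/(4(1+α))` on which `M` is
α-strongly diagonally dominant. -/
private lemma exists_good_subset {ι : Type*} [Fintype ι] [DecidableEq ι] (α : ℝ) (hα : 0 ≤ α)
    (M : ι → ι → ℝ) (hdd : ∀ i, ∑ j ∈ Finset.univ.erase i, |M i j| ≤ M i i)
    (H : Finset ι) (hH1 : 1 ≤ H.card) :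
    ∃ F : Finset ι, F ⊆ H ∧ (1:ℝ) ≤ 2 * F.card ∧
      ((H.card : ℝ) - 1) / (2*(1+α)) ≤ 2 * F.card ∧
      ∀ i ∈ F, (1+α) * ∑ j ∈ F.erase i, |M i j| ≤ M i i := by
  classical
  have h1α : (0:ℝ) < 1 + α := by linarith
  have hdiag : ∀ i, 0 ≤ M i i := fun i =>
    le_trans (Finset.sum_nonneg fun j _ => abs_nonneg _) (hdd i)
  set h := H.card with hh
  have hh1 : (1:ℝ) ≤ h := by exact_mod_cast hH1
  set t : ℕ := ⌊((h:ℝ)-1)/(2*(1+α))⌋₊ with ht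
  set s : ℕ := t + 1 with hs
  have hsh : s ≤ h := by
    have hle : ((h:ℝ)-1)/(2*(1+α)) ≤ (((h-1 : ℕ)) : ℝ) := by
      rw [Nat.cast_sub hH1, Nat.cast_one]
      exact div_le_self (by linarith) (by linarith)
    have ht' : t ≤ h - 1 := le_trans (Nat.floor_le_floor hle) (by rw [Nat.floor_natCast])
    omega
  set SS := H.powersetCard s with hSS
  have hSSne : SS.Nonempty := Finset.powersetCard_nonempty.mpr hsh
  set cond : ι → Finset ι → Prop :=
    fun i S => (1+α) * ∑ j ∈ S.erase i, |M i j| ≤ M i i with hcond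
  have key : ∑ S ∈ SS, ((S.filter fun i => ¬ cond i S).card : ℝ) ≤ (s:ℝ) * SS.card / 2 := by
    have swap : ∑ S ∈ SS, ((S.filter fun i => ¬ cond i S).card : ℝ)
        = ∑ i ∈ H, (((SS.filter (fun S => i ∈ S)).filter (fun S => ¬ cond i S)).card : ℝ) := by
      have e1 : ∀ S ∈ SS, ((S.filter fun i => ¬ cond i S).card : ℝ)
          = ∑ i ∈ S, (fun i S => if ¬ cond i S then (1:ℝ) else 0) i S := by
        intro S _
        exact (Finset.sum_boole _ _).symm
      rw [Finset.sum_congr rfl e1, hSS,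
        sum_swap_powerset H s (fun i S => if ¬ cond i S then (1:ℝ) else 0)]
      exact Finset.sum_congr rfl fun i _ => Finset.sum_boole _ _
    rw [swap]
    rcases Nat.eq_zero_or_pos t with ht0 | htpos
    · have hbz : ∀ i ∈ H, ((SS.filter (fun S => i ∈ S)).filter (fun S => ¬ cond i S)) = ∅ := by
        intro i _
        rw [Finset.filter_eq_empty_iff]
        intro S hS
        rw [not_not]
        obtain ⟨hS1, hiS⟩ := Finset.mem_filter.mp hS
        have hcard1 : S.card = 1 := by
          have hc := (Finset.mem_powersetCard.mp hS1).2
          omega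
        obtain ⟨a, rfl⟩ := Finset.card_eq_one.mp hcard1
        have : i = a := by simpa using hiS
        subst this
        show (1+α) * ∑ j ∈ ({i} : Finset ι).erase i, |M i j| ≤ M i i
        rw [Finset.erase_singleton]
        simpa using hdiag i
      rw [Finset.sum_congr rfl (fun i hi => by rw [hbz i hi])]
      simp only [Finset.card_empty, Nat.cast_zero, Finset.sum_const_zero]
      positivity
    · obtain ⟨u, hu⟩ : ∃ u, t = u + 1 := ⟨t-1, by omega⟩
      have hfl : 2*(1+α)*(t:ℝ) ≤ (h:ℝ)-1 := by
        have h0 : (0:ℝ) ≤ ((h:ℝ)-1)/(2*(1+α)) := div_nonneg (by linarith) (by linarith)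
        have hle := Nat.floor_le h0
        rw [← ht, le_div_iff₀ (by linarith : (0:ℝ) < 2*(1+α))] at hle
        linarith
      have hfl' : 2*(1+α)*((u:ℝ)+1) ≤ (h:ℝ)-1 := by
        rw [hu] at hfl
        push_cast at hfl
        linarith
      have hge3 : 3 ≤ h := by
        have ht1 : (1:ℝ) ≤ (u:ℝ)+1 := by
          have : (0:ℝ) ≤ (u:ℝ) := Nat.cast_nonneg u
          linarith
        have h3r : (3:ℝ) ≤ h := by nlinarith
        exact_mod_cast h3r
      have hper : ∀ i ∈ H, (((SS.filter (fun S => i ∈ S)).filter (fun S => ¬ cond i S)).card : ℝ)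
          ≤ (1+α) * (((h-2).choose u : ℕ) : ℝ) := by
        intro i hi
        set bad := (SS.filter (fun S => i ∈ S)).filter (fun S => ¬ cond i S) with hbad
        have hrow : ∑ j ∈ H.erase i, |M i j| ≤ M i i := by
          refine le_trans (Finset.sum_le_sum_of_subset_of_nonneg ?_
            (fun j _ _ => abs_nonneg _)) (hdd i)
          exact Finset.erase_subset_erase i (Finset.subset_univ H)
        have e2 : ∑ S ∈ SS.filter (fun S => i ∈ S), ∑ j ∈ S.erase i, |M i j|
            = (((h-2).choose u : ℕ) : ℝ) * ∑ j ∈ H.erase i, |M i j| := by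
          have hs' : s = (u+1) + 1 := by omega
          rw [hSS, hs', sum_erase_powersetCard H (u+1) hi (fun T => ∑ j ∈ T, |M i j|),
            sum_powersetCard_sum (H.erase i) u (fun j => |M i j|)]
          have ec : (H.erase i).card - 1 = h - 2 := by
            rw [Finset.card_erase_of_mem hi]
            omega
          rw [ec]
        have markov : ((bad.card : ℕ) : ℝ) * M i i
            ≤ (1+α) * (((h-2).choose u : ℕ) : ℝ) * M i i := by
          calc ((bad.card : ℕ) : ℝ) * M i i = ∑ _S ∈ bad, M i i := by
                rw [Finset.sum_const, nsmul_eq_mul]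
            _ ≤ ∑ S ∈ bad, (1+α) * ∑ j ∈ S.erase i, |M i j| := by
                refine Finset.sum_le_sum fun S hS => ?_
                have hb := (Finset.mem_filter.mp hS).2
                simp only [hcond, not_le] at hb
                exact le_of_lt hb
            _ ≤ ∑ S ∈ SS.filter (fun S => i ∈ S), (1+α) * ∑ j ∈ S.erase i, |M i j| :=
                Finset.sum_le_sum_of_subset_of_nonneg (Finset.filter_subset _ _)
                  (fun S _ _ => mul_nonneg (by linarith)
                    (Finset.sum_nonneg fun j _ => abs_nonneg _))
            _ = (1+α) * ∑ S ∈ SS.filter (fun S => i ∈ S), ∑ j ∈ S.erase i, |M i j| := by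
                rw [Finset.mul_sum]
            _ = (1+α) * ((((h-2).choose u : ℕ)):ℝ) * ∑ j ∈ H.erase i, |M i j| := by
                rw [e2]; ring
            _ ≤ (1+α) * ((((h-2).choose u : ℕ)):ℝ) * M i i :=
                mul_le_mul_of_nonneg_left hrow (by positivity)
        rcases (hdiag i).eq_or_lt with heq | hlt
        · have hbe : bad = ∅ := by
            rw [hbad, Finset.filter_eq_empty_iff]
            intro S _
            rw [not_not]
            show (1+α) * ∑ j ∈ S.erase i, |M i j| ≤ M i i
            have hsub : S.erase i ⊆ Finset.univ.erase i :=
              Finset.erase_subset_erase i (Finset.subset_univ S)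
            have hle1 : ∑ j ∈ S.erase i, |M i j| ≤ 0 := by
              refine le_trans (Finset.sum_le_sum_of_subset_of_nonneg hsub
                (fun j _ _ => abs_nonneg _)) ?_
              exact le_of_le_of_eq (hdd i) heq.symm
            have hle2 : (0:ℝ) ≤ ∑ j ∈ S.erase i, |M i j| :=
              Finset.sum_nonneg fun j _ => abs_nonneg _
            have hz : ∑ j ∈ S.erase i, |M i j| = 0 := le_antisymm hle1 hle2
            rw [hz, mul_zero, ← heq]
          rw [hbe]
          simp only [Finset.card_empty, Nat.cast_zero]
          positivity
        · exact le_of_mul_le_mul_right markov hlt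
      have hsum : ∑ i ∈ H, (((SS.filter (fun S => i ∈ S)).filter
            (fun S => ¬ cond i S)).card : ℝ)
          ≤ (h:ℝ) * ((1+α) * (((h-2).choose u : ℕ) : ℝ)) := by
        calc ∑ i ∈ H, (((SS.filter (fun S => i ∈ S)).filter (fun S => ¬ cond i S)).card : ℝ)
            ≤ ∑ _i ∈ H, (1+α) * (((h-2).choose u : ℕ) : ℝ) := Finset.sum_le_sum hper
          _ = (h:ℝ) * ((1+α) * (((h-2).choose u : ℕ) : ℝ)) := by
              rw [Finset.sum_const, nsmul_eq_mul, ← hh]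
      refine le_trans hsum ?_
      have idA : ((h-1) * ((h-2).choose u) : ℕ) = ((h-1).choose (u+1)) * (u+1) := by
        have e : (h-2) + 1 = h-1 := by omega
        have hA := Nat.add_one_mul_choose_eq (h-2) u
        simp only [Nat.succ_eq_add_one, e] at hA
        exact hA
      have hs2 : s = u + 2 := by omega
      have idB : (h * ((h-1).choose (u+1)) : ℕ) = (h.choose s) * s := by
        have e : (h-1) + 1 = h := by omega
        have hB2 := Nat.add_one_mul_choose_eq (h-1) (u+1)
        simp only [Nat.succ_eq_add_one, e] at hB2
        rw [hB2, hs2]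
      have c1 : ((h-1:ℕ):ℝ) = (h:ℝ)-1 := by
        rw [Nat.cast_sub (by omega : 1 ≤ h)]
        norm_num
      have rA : ((h:ℝ)-1) * (((h-2).choose u : ℕ):ℝ)
          = ((u:ℝ)+1) * (((h-1).choose (u+1) : ℕ):ℝ) := by
        have hc := congrArg (fun x : ℕ => (x:ℝ)) idA
        push_cast at hc
        rw [c1] at hc
        linarith
      have rB : (h:ℝ) * (((h-1).choose (u+1) : ℕ):ℝ) = ((h.choose s : ℕ):ℝ) * (s:ℝ) := by
        have hc := congrArg (fun x : ℕ => (x:ℝ)) idB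
        push_cast at hc
        have hsr : (s:ℝ) = (t:ℝ)+1 := by rw [hs]; push_cast; ring
        rw [hsr] at hc ⊢
        linarith
      have hC2 : (0:ℝ) ≤ (((h-2).choose u : ℕ):ℝ) := by positivity
      have step1 : 2*(1+α)*(((h-2).choose u : ℕ):ℝ) ≤ (((h-1).choose (u+1) : ℕ):ℝ) := by
        have hp : (0:ℝ) < (u:ℝ)+1 := by positivity
        have hmul : ((u:ℝ)+1)*(2*(1+α)*(((h-2).choose u : ℕ):ℝ))
            ≤ ((u:ℝ)+1)*(((h-1).choose (u+1) : ℕ):ℝ) := by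
          calc ((u:ℝ)+1)*(2*(1+α)*(((h-2).choose u : ℕ):ℝ))
              = (2*(1+α)*((u:ℝ)+1))*(((h-2).choose u : ℕ):ℝ) := by ring
            _ ≤ ((h:ℝ)-1)*(((h-2).choose u : ℕ):ℝ) :=
                mul_le_mul_of_nonneg_right hfl' hC2
            _ = ((u:ℝ)+1)*(((h-1).choose (u+1) : ℕ):ℝ) := rA
        exact le_of_mul_le_mul_left hmul hp
      have hh0 : (0:ℝ) ≤ h := by positivity
      have hSScard : (SS.card : ℝ) = ((h.choose s : ℕ):ℝ) := by
        rw [hSS, Finset.card_powersetCard, ← hh]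
      rw [hSScard]
      calc (h:ℝ)*((1+α)*(((h-2).choose u : ℕ):ℝ))
          ≤ (h:ℝ)*((((h-1).choose (u+1) : ℕ):ℝ)/2) := by
            refine mul_le_mul_of_nonneg_left ?_ hh0
            linarith
        _ = ((h:ℝ) * (((h-1).choose (u+1) : ℕ):ℝ))/2 := by ring
        _ = ((s:ℝ) * ((h.choose s : ℕ):ℝ))/2 := by rw [rB]; ring
        _ = (s:ℝ) * ((h.choose s : ℕ):ℝ) / 2 := by ring
  have goodsum : ∑ S ∈ SS, ((s:ℝ)/2) ≤ ∑ S ∈ SS, ((S.filter fun i => cond i S).card : ℝ) := by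
    have e : ∀ S ∈ SS, ((S.filter fun i => cond i S).card : ℝ)
        = (s:ℝ) - ((S.filter fun i => ¬ cond i S).card : ℝ) := by
      intro S hS
      have h1 := Finset.card_filter_add_card_filter_not (s := S)
        (p := fun i => cond i S)
      have h2 : S.card = s := (Finset.mem_powersetCard.mp hS).2
      rw [h2] at h1
      have hc := congrArg (fun x : ℕ => (x:ℝ)) h1
      push_cast at hc
      have hsr : (s:ℝ) = (t:ℝ)+1 := by rw [hs]; push_cast; ring
      rw [hsr]
      linarith
    rw [Finset.sum_congr rfl e, Finset.sum_sub_distrib, Finset.sum_const, Finset.sum_const,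
      nsmul_eq_mul, nsmul_eq_mul]
    linarith [key]
  obtain ⟨S, hSmem, hSgood⟩ := Finset.exists_le_of_sum_le hSSne goodsum
  refine ⟨S.filter (fun i => cond i S), ?_, ?_, ?_, ?_⟩
  · exact subset_trans (Finset.filter_subset _ _) (Finset.mem_powersetCard.mp hSmem).1
  · have hs1 : (1:ℝ) ≤ s := by exact_mod_cast (by omega : 1 ≤ s)
    linarith [hSgood]
  · have hsx : ((h:ℝ)-1)/(2*(1+α)) < s := by
      rw [div_lt_iff₀ (by linarith : (0:ℝ) < 2*(1+α)), hs, ht]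
      have := Nat.lt_floor_add_one (((h:ℝ)-1)/(2*(1+α)))
      rw [div_lt_iff₀ (by linarith : (0:ℝ) < 2*(1+α))] at this
      push_cast
      calc ((h:ℝ)-1) < (⌊((h:ℝ)-1)/(2*(1+α))⌋₊ + 1) * (2*(1+α)) := this
        _ = (⌊((h:ℝ)-1)/(2*(1+α))⌋₊ + 1) * (2*(1+α)) := rfl
    have hd : ((h:ℝ)-1)/(2*(1+α)) ≤ s := le_of_lt hsx
    linarith [hSgood]
  · intro i hiF
    have hcondi : cond i S := (Finset.mem_filter.mp hiF).2
    have hsub : (S.filter (fun i => cond i S)).erase i ⊆ S.erase i :=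
      Finset.erase_subset_erase _ (Finset.filter_subset _ _)
    have hmono := Finset.sum_le_sum_of_subset_of_nonneg hsub
      (fun j _ _ => abs_nonneg (M i j))
    have := hcondi
    simp only [hcond] at this
    nlinarith [hmono, this]


set_option maxHeartbeats 1000000 in
/-- For every n×n symmetric diagonally dominant matrix `M` and every
`α ≥ 0`, there exists a subset `F` of the indices with `|F| ≥ n/(16(1+α))` such
that `M_FF` is α-strongly diagonally dominant and every column indexed by `F`
has at most `2m/n` nonzero entries, where `m` is the total number of nonzero
entries of `M`. -/
theorem sdd_low_degree_subset_exists (n : ℕ) (M : Matrix (Fin n) (Fin n) ℝ) (α : ℝ)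
    (hsym : M.IsSymm)
    (hdd : ∀ i, ∑ j ∈ Finset.univ.erase i, |M i j| ≤ M i i)
    (hα : 0 ≤ α) :
    ∃ F : Finset (Fin n),
      (n : ℝ) / (16 * (1 + α)) ≤ (F.card : ℝ) ∧
      IsStronglyDD α (M.submatrix (fun i : F => (i : Fin n)) (fun j : F => (j : Fin n))) ∧
      ∀ i ∈ F,
        (((Finset.univ.filter fun j => M j i ≠ 0).card : ℝ)) ≤
          2 * (((Finset.univ : Finset (Fin n × Fin n)).filter
                  fun p => M p.1 p.2 ≠ 0).card : ℝ) / (n : ℝ) := by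
  classical
  rcases Nat.eq_zero_or_pos n with hn0 | hn
  · subst hn0
    refine ⟨∅, by simp, fun i => (i : Fin 0).elim0, by simp⟩
  have h1α : (0:ℝ) < 1 + α := by linarith
  set m : ℕ := ((Finset.univ : Finset (Fin n × Fin n)).filter fun p => M p.1 p.2 ≠ 0).card
    with hm
  have hsumcol : ∑ i : Fin n, ((Finset.univ.filter fun j => M j i ≠ 0).card) = m := by
    rw [hm, Finset.card_eq_sum_card_fiberwise (f := Prod.snd) (t := Finset.univ)
      (fun x _ => Finset.mem_univ _)]
    refine Finset.sum_congr rfl fun i _ => ?_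
    refine Finset.card_bij' (fun j _ => ((j, i) : Fin n × Fin n)) (fun p _ => p.1) ?_ ?_ ?_ ?_
    · intro j hj
      simp only [Finset.mem_filter, Finset.mem_univ, true_and] at hj ⊢
      exact ⟨hj, trivial⟩
    · intro p hp
      simp only [Finset.mem_filter, Finset.mem_univ, true_and] at hp ⊢
      exact hp.2 ▸ hp.1
    · intro j hj; rfl
    · intro p hp
      simp only [Finset.mem_filter] at hp
      exact Prod.ext rfl hp.2.symm
  set Hs : Finset (Fin n) := Finset.univ.filter
      (fun i => (((Finset.univ.filter fun j => M j i ≠ 0).card : ℝ)) ≤ 2 * (m:ℝ) / (n:ℝ))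
    with hHs
  have hmemH : ∀ i ∈ Hs,
      (((Finset.univ.filter fun j => M j i ≠ 0).card : ℝ)) ≤ 2 * (m:ℝ) / (n:ℝ) :=
    fun i hi => (Finset.mem_filter.mp hi).2
  have hHcard : (n : ℝ) ≤ 2 * Hs.card := by
    by_cases hm0 : m = 0
    · have hcol0 : ∀ i : Fin n, ((Finset.univ.filter fun j => M j i ≠ 0).card) = 0 := by
        intro i
        have h0 : ∑ i : Fin n, ((Finset.univ.filter fun j => M j i ≠ 0).card) = 0 := by
          rw [hsumcol, hm0]
        exact Finset.sum_eq_zero_iff.mp h0 i (Finset.mem_univ i)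
      have hHu : Hs = Finset.univ := by
        rw [hHs]
        refine Finset.filter_true_of_mem fun i _ => ?_
        rw [hcol0 i]
        push_cast
        positivity
      rw [hHu, Finset.card_univ, Fintype.card_fin]
      have : (0:ℝ) ≤ n := by positivity
      linarith
    · set B := Finset.univ.filter
        (fun i => ¬ ((((Finset.univ.filter fun j => M j i ≠ 0).card : ℝ)) ≤ 2 * (m:ℝ) / (n:ℝ)))
        with hB
      have hBH : Hs.card + B.card = n := by
        rw [hHs, hB, Finset.card_filter_add_card_filter_not, Finset.card_univ,
          Fintype.card_fin]
      have h1 : (B.card : ℝ) * (2*(m:ℝ)/(n:ℝ))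
          ≤ ∑ i ∈ B, (((Finset.univ.filter fun j => M j i ≠ 0).card : ℝ)) := by
        have hc : (B.card : ℝ) * (2*(m:ℝ)/(n:ℝ)) = ∑ _i ∈ B, (2*(m:ℝ)/(n:ℝ)) := by
          rw [Finset.sum_const, nsmul_eq_mul]
        rw [hc]
        refine Finset.sum_le_sum fun i hi => ?_
        have h2 := (Finset.mem_filter.mp hi).2
        push_neg at h2
        exact le_of_lt h2
      have h2 : ∑ i ∈ B, (((Finset.univ.filter fun j => M j i ≠ 0).card : ℝ)) ≤ (m:ℝ) := by
        calc ∑ i ∈ B, (((Finset.univ.filter fun j => M j i ≠ 0).card : ℝ))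
            ≤ ∑ i ∈ Finset.univ, (((Finset.univ.filter fun j => M j i ≠ 0).card : ℝ)) :=
              Finset.sum_le_sum_of_subset_of_nonneg (Finset.subset_univ B)
                (fun i _ _ => Nat.cast_nonneg _)
          _ = (m:ℝ) := by rw [← hsumcol]; push_cast; rfl
      have hm1 : (1:ℝ) ≤ m := by exact_mod_cast Nat.one_le_iff_ne_zero.mpr hm0
      have hn1 : (1:ℝ) ≤ n := by exact_mod_cast hn
      have hcards : (Hs.card:ℝ) + B.card = n := by exact_mod_cast hBH
      have hdn : (2*(m:ℝ)/(n:ℝ)) * n = 2*m := by field_simp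
      have h3 : (B.card:ℝ) * (2*(m:ℝ)) ≤ m * n := by
        calc (B.card:ℝ) * (2*(m:ℝ)) = ((B.card:ℝ) * (2*(m:ℝ)/(n:ℝ))) * n := by
              rw [mul_assoc, hdn]
          _ ≤ m * n := mul_le_mul_of_nonneg_right (le_trans h1 h2) (by linarith)
      nlinarith [h3, hcards, hm1, Nat.cast_nonneg (α := ℝ) B.card]
  have hH1 : 1 ≤ Hs.card := by
    have h1n : (1:ℝ) ≤ n := by exact_mod_cast hn
    have hpos : (0:ℝ) < Hs.card := by linarith
    exact_mod_cast Nat.cast_pos.mp hpos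
  obtain ⟨F, hFH, h1F, hsize, hSDD⟩ :=
    exists_good_subset α hα (fun i j => M i j) hdd Hs hH1
  refine ⟨F, ?_, ?_, ?_⟩
  · rw [div_le_iff₀ (by linarith : (0:ℝ) < 16*(1+α))]
    have hHr : (1:ℝ) ≤ Hs.card := by exact_mod_cast hH1
    nlinarith [hHcard, h1F, hsize, hα, Nat.cast_nonneg (α := ℝ) F.card,
      (div_le_iff₀ (by linarith : (0:ℝ) < 2*(1+α))).mp hsize]
  · intro i
    have hiF : (i : Fin n) ∈ F := i.2
    have hcondi := hSDD _ hiF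
    show (1+α) * ∑ j ∈ Finset.univ.erase i, |M (i:Fin n) (j:Fin n)| ≤ M (i:Fin n) (i:Fin n)
    have e : ∑ j ∈ (Finset.univ : Finset F).erase i, |M (i:Fin n) (j:Fin n)|
        = ∑ j ∈ F.erase (i:Fin n), |M (i:Fin n) j| := by
      rw [Finset.sum_erase_eq_sub (Finset.mem_univ i), Finset.sum_erase_eq_sub hiF]
      congr 1
      exact Finset.sum_coe_sort F (fun j => |M (i:Fin n) j|)
    rw [e]
    exact hcondi
  · intro i hiF
    have hcol := hmemH _ (hFH hiF)
    rw [hm] at hcol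
    exact hcol
end
end

section
/- Let M be an SDDM matrix that is α-strongly diagonally dominant for some α ≥ 0, and write M = X + L where X is a nonnegative diagonal matrix and L is a Laplacian matrix. Then X ⪰ (α/2)·L. -/
open Matrix BigOperators Finset
open scoped Classical

noncomputable section

/-- Let `M` be an SDDM matrix that is α-strongly diagonally dominant
for some `α ≥ 0`, and write `M = X + L` with `X` a nonnegative diagonal matrix
and `L` a Laplacian. Then `X ⪰ (α/2)·L`. -/
theorem X_dominates_L {n : Type*} [Fintype n] [DecidableEq n]
    (M X L : Matrix n n ℝ) (α : ℝ)
    (hM : IsSDDM M) (hα : 0 ≤ α) (hsdd : IsStronglyDD α M)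
    (hXdiag : ∀ i j, i ≠ j → X i j = 0) (hXnn : ∀ i, 0 ≤ X i i)
    (hL : IsLaplacian L) (hdecomp : M = X + L) :
    PSDLE ((α / 2) • L) X := by
  obtain ⟨hLsym, hLoff, hLrow⟩ := hL
  have hLsym' : ∀ i j, L j i = L i j := fun i j => by
    have := congrFun (congrFun hLsym j) i
    simpa [Matrix.transpose_apply] using this.symm
  have hML : ∀ i j, i ≠ j → M i j = L i j := by
    intro i j hij
    rw [hdecomp]; simp [Matrix.add_apply, hXdiag i j hij]
  have hdiagL : ∀ i, L i i = ∑ j ∈ Finset.univ.erase i, (-L i j) := by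
    intro i
    have h1 : L i i + ∑ j ∈ Finset.univ.erase i, L i j = ∑ j, L i j :=
      Finset.add_sum_erase _ _ (Finset.mem_univ i)
    rw [hLrow i] at h1
    rw [Finset.sum_neg_distrib]
    linarith
  have habs : ∀ i, ∑ j ∈ Finset.univ.erase i, |M i j| = L i i := by
    intro i
    rw [hdiagL i]
    refine Finset.sum_congr rfl fun j hj => ?_
    have hij : i ≠ j := (Finset.ne_of_mem_erase hj).symm
    rw [hML i j hij, abs_of_nonpos (hLoff i j hij)]
  have hXL : ∀ i, α * L i i ≤ X i i := by
    intro i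
    have h1 := hsdd i
    rw [habs i] at h1
    have h2 : M i i = X i i + L i i := by rw [hdecomp]; simp [Matrix.add_apply]
    rw [h2] at h1; nlinarith
  refine Matrix.PosSemidef.of_dotProduct_mulVec_nonneg ?_ ?_
  · ext i j
    simp only [Matrix.conjTranspose_apply, Matrix.sub_apply, Matrix.smul_apply,
      star_trivial, smul_eq_mul]
    by_cases hij : i = j
    · subst hij; ring
    · rw [hLsym' j i, hXdiag j i (Ne.symm hij), hXdiag i j hij]
  · intro x
    simp only [star_trivial]
    set A := X - (α / 2) • L with hA
    set T : n → ℝ := fun i => ∑ j ∈ Finset.univ.erase i, L i j * x j with hT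
    set U : n → ℝ := fun i => ∑ j ∈ Finset.univ.erase i, (-L i j) * (x j)^2 with hU
    set S : n → ℝ := fun i => ∑ j ∈ Finset.univ.erase i, (-L i j) * (x i + x j)^2 with hS
    have hswap : ∑ i, U i = ∑ i, L i i * (x i)^2 := by
      simp only [hU]
      rw [Finset.sum_comm' (t' := Finset.univ) (s' := fun j => Finset.univ.erase j)
        (by intro i j; simp [Finset.mem_erase, ne_comm, eq_comm])]
      refine Finset.sum_congr rfl fun j _ => ?_
      rw [hdiagL j, Finset.sum_mul]
      exact Finset.sum_congr rfl fun i _ => by rw [hLsym' i j]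
    have hSexp : ∀ i, S i = L i i * (x i)^2 - 2 * x i * T i + U i := by
      intro i
      have h1 : S i = ∑ j ∈ Finset.univ.erase i,
          ((-L i j) * (x i)^2 + (2 * x i) * (-(L i j * x j)) + (-L i j) * (x j)^2) :=
        Finset.sum_congr rfl fun j _ => by ring
      have e1 : ∑ j ∈ Finset.univ.erase i, (-L i j) * (x i)^2 = L i i * (x i)^2 := by
        rw [hdiagL i, Finset.sum_mul]
      have e2 : ∑ j ∈ Finset.univ.erase i, (2 * x i) * (-(L i j * x j))
          = -(2 * x i * T i) := by
        rw [← Finset.mul_sum, Finset.sum_neg_distrib]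
        simp only [hT]; ring
      have e3 : ∑ j ∈ Finset.univ.erase i, (-L i j) * (x j)^2 = U i := rfl
      rw [h1, Finset.sum_add_distrib, Finset.sum_add_distrib, e1, e2, e3]
      ring
    have hsplit : ∀ i, ∑ j, A i j * x j
        = X i i * x i - (α/2) * (L i i * x i) - (α/2) * T i := by
      intro i
      rw [← Finset.add_sum_erase _ _ (Finset.mem_univ i)]
      have h0 : ∑ j ∈ Finset.univ.erase i, A i j * x j = -((α/2) * T i) := by
        have hc : ∀ j ∈ Finset.univ.erase i, A i j * x j = -((α/2) * (L i j * x j)) := by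
          intro j hj
          have hij : i ≠ j := (Finset.ne_of_mem_erase hj).symm
          simp only [hA, Matrix.sub_apply, Matrix.smul_apply, smul_eq_mul,
            hXdiag i j hij]
          ring
        rw [Finset.sum_congr rfl hc, Finset.sum_neg_distrib, ← Finset.mul_sum]
      rw [h0]
      simp only [hA, Matrix.sub_apply, Matrix.smul_apply, smul_eq_mul]
      ring
    have main : ∀ i, x i * ∑ j, A i j * x j
        = ((X i i - α * L i i) * (x i)^2 + (α/4) * S i)
          + (α/4) * (L i i * (x i)^2 - U i) := by
      intro i
      rw [hsplit i, hSexp i]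
      ring
    have hQ : dotProduct x (A *ᵥ x)
        = ∑ i, ((X i i - α * L i i) * (x i)^2 + (α/4) * S i)
          + (α/4) * (∑ i, L i i * (x i)^2 - ∑ i, U i) := by
      have h1 : dotProduct x (A *ᵥ x)
          = ∑ i, (((X i i - α * L i i) * (x i)^2 + (α/4) * S i)
            + (α/4) * (L i i * (x i)^2 - U i)) := by
        simp only [dotProduct, Matrix.mulVec]
        exact Finset.sum_congr rfl fun i _ => main i
      rw [h1, Finset.sum_add_distrib]
      congr 1
      rw [mul_sub, Finset.mul_sum, Finset.mul_sum, ← Finset.sum_sub_distrib]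
      exact Finset.sum_congr rfl fun i _ => by ring
    rw [hQ, hswap, sub_self, mul_zero, add_zero]
    refine Finset.sum_nonneg fun i _ => add_nonneg ?_ ?_
    · have h := hXL i
      exact mul_nonneg (by linarith) (sq_nonneg _)
    · refine mul_nonneg (by linarith) ?_
      refine Finset.sum_nonneg fun j hj => ?_
      have hij : i ≠ j := (Finset.ne_of_mem_erase hj).symm
      have h := hLoff i j hij
      exact mul_nonneg (by linarith) (sq_nonneg _)
end
end

section
/- Let X be a diagonal matrix with positive diagonal entries and L a Laplacian matrix of the same size with L ⪯ β·X for some 0 ≤ β < 1. Let k be an odd positive integer, set Z^{(k)} = Σ_{i=0}^{k} X^{−1}·(−L·X^{−1})^{i}, and set δ = β^{k}·(1+β)/(1−β^{k+1}). Then Z^{(k)} is invertible and X + L ⪯ (Z^{(k)})^{−1} ⪯ X + (1+δ)·L. -/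
open Matrix BigOperators Finset
open scoped Classical

noncomputable section

-- aux 1: conjugated powers
lemma conj_pow_aux {n : Type*} [Fintype n] [DecidableEq n]
    (S T A : Matrix n n ℝ) (h1 : S * T = 1) (h2 : T * S = 1) (i : ℕ) :
    (S * A * T) ^ i = S * A ^ i * T := by
  induction i with
  | zero => rw [pow_zero, pow_zero, mul_one, h1]
  | succ i ih =>
      rw [pow_succ, pow_succ, ih]
      calc S * A ^ i * T * (S * A * T) = S * A ^ i * (T * S) * A * T := by
            simp only [mul_assoc]
        _ = S * (A ^ i * A) * T := by rw [h2, mul_one]; simp only [mul_assoc]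

-- aux 2: sum of diagonal matrices
lemma diagonal_sum_aux {n : Type*} [Fintype n] [DecidableEq n]
    (s : Finset ℕ) (f : ℕ → n → ℝ) :
    ∑ i ∈ s, Matrix.diagonal (f i) = Matrix.diagonal (fun j => ∑ i ∈ s, f i j) := by
  ext a b
  rw [Matrix.sum_apply]
  by_cases h : a = b
  · subst h; simp
  · simp [Matrix.diagonal_apply_ne _ h]

-- aux 3: difference of conjugated diagonals is PSD
lemma conj_sub_psd {n : Type*} [Fintype n] [DecidableEq n]
    (C : Matrix n n ℝ) (v w : n → ℝ) (h : ∀ j, v j ≤ w j) :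
    (C * Matrix.diagonal w * Cᴴ - C * Matrix.diagonal v * Cᴴ).PosSemidef := by
  have hd : C * Matrix.diagonal w * Cᴴ - C * Matrix.diagonal v * Cᴴ
      = C * Matrix.diagonal (w - v) * Cᴴ := by
    have hdv : Matrix.diagonal (w - v) = Matrix.diagonal w - Matrix.diagonal v := by
      ext a b; by_cases hab : a = b
      · subst hab; simp
      · simp [Matrix.diagonal_apply_ne _ hab]
    rw [hdv, Matrix.mul_sub, Matrix.sub_mul]
  rw [hd]
  exact (Matrix.posSemidef_diagonal_iff.mpr fun j => sub_nonneg.mpr (h j)).mul_mul_conjTranspose_same C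

-- aux 4: Laplacians are PSD
lemma laplacian_posSemidef {n : Type*} [Fintype n] [DecidableEq n]
    {L : Matrix n n ℝ} (hL : IsLaplacian L) : L.PosSemidef := by
  obtain ⟨hsymm, hoff, hrow⟩ := hL
  have hcol : ∀ j, ∑ i, L i j = 0 := by
    intro j
    have : ∀ i, L i j = L j i := fun i => by
      conv_lhs => rw [← hsymm]
      rfl
    rw [Finset.sum_congr rfl fun i _ => this i]
    exact hrow j
  refine Matrix.PosSemidef.of_dotProduct_mulVec_nonneg ?_ ?_
  · rw [Matrix.IsHermitian, Matrix.conjTranspose_eq_transpose_of_trivial]; exact hsymm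
  · intro x
    have key : ∑ i, ∑ j, (-L i j) * (x i - x j) ^ 2
        = 2 * (dotProduct (star x) (L *ᵥ x)) := by
      have e1 : ∀ i j, (-L i j) * (x i - x j) ^ 2
          = (-(L i j)) * x i ^ 2 + (-(L i j)) * x j ^ 2 + 2 * (L i j * (x i * x j)) := by
        intro i j; ring
      have hsplit : ∑ i, ∑ j, (-L i j) * (x i - x j) ^ 2
          = (∑ i, ∑ j, (-(L i j)) * x i ^ 2) + (∑ i, ∑ j, (-(L i j)) * x j ^ 2)
            + 2 * ∑ i, ∑ j, L i j * (x i * x j) := by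
        rw [Finset.mul_sum, ← Finset.sum_add_distrib]
        rw [← Finset.sum_add_distrib]
        refine Finset.sum_congr rfl fun i _ => ?_
        rw [Finset.mul_sum, ← Finset.sum_add_distrib, ← Finset.sum_add_distrib]
        exact Finset.sum_congr rfl fun j _ => e1 i j
      have z1 : ∑ i, ∑ j, (-(L i j)) * x i ^ 2 = (0:ℝ) := by
        refine Finset.sum_eq_zero fun i _ => ?_
        rw [← Finset.sum_mul]
        have : ∑ j, -L i j = (0:ℝ) := by
          rw [Finset.sum_neg_distrib, hrow i, neg_zero]
        rw [this, zero_mul]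
      have z2 : ∑ i, ∑ j, (-(L i j)) * x j ^ 2 = (0:ℝ) := by
        rw [Finset.sum_comm]
        refine Finset.sum_eq_zero fun j _ => ?_
        rw [← Finset.sum_mul]
        have : ∑ i, -L i j = (0:ℝ) := by
          rw [Finset.sum_neg_distrib, hcol j, neg_zero]
        rw [this, zero_mul]
      have hdp : dotProduct (star x) (L *ᵥ x) = ∑ i, ∑ j, L i j * (x i * x j) := by
        simp only [dotProduct, Matrix.mulVec, Pi.star_apply, star_trivial,
          dotProduct, Finset.mul_sum]
        refine Finset.sum_congr rfl fun i _ => Finset.sum_congr rfl fun j _ => ?_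
        ring
      rw [hsplit, z1, z2, hdp]
      ring
    have hnn : 0 ≤ ∑ i, ∑ j, (-L i j) * (x i - x j) ^ 2 := by
      refine Finset.sum_nonneg fun i _ => Finset.sum_nonneg fun j _ => ?_
      by_cases h : i = j
      · subst h; simp
      · exact mul_nonneg (by linarith [hoff i j h]) (sq_nonneg _)
    rw [key] at hnn
    linarith

lemma geom_scalar_bounds (β a g : ℝ) (k : ℕ) (hβ0 : 0 ≤ β) (hβ1 : β < 1)
    (ha0 : 0 ≤ a) (haβ : a ≤ β) (hg : g * (1 + a) = 1 - a ^ (k + 1)) :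
    1 + a ≤ g⁻¹ ∧ g⁻¹ ≤ 1 + (1 + β ^ k * (1 + β) / (1 - β ^ (k + 1))) * a := by
  have hak : a ^ k ≤ β ^ k := pow_le_pow_left₀ ha0 haβ k
  have hak1 : a ^ (k + 1) ≤ β ^ (k + 1) := pow_le_pow_left₀ ha0 haβ _
  have hβk1 : β ^ (k + 1) < 1 := pow_lt_one₀ hβ0 hβ1 (by omega)
  have hA : 0 < 1 - a ^ (k + 1) := by linarith
  have hB : 0 < 1 - β ^ (k + 1) := by linarith
  have hgpos : 0 < g := by nlinarith
  have hginv : g⁻¹ = (1 + a) / (1 - a ^ (k + 1)) := by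
    rw [eq_div_iff hA.ne', ← hg, ← mul_assoc, inv_mul_cancel₀ hgpos.ne', one_mul]
  constructor
  · rw [hginv, le_div_iff₀ hA]
    nlinarith [pow_nonneg ha0 (k + 1)]
  · have hstep : g⁻¹ = (1 + a) + (1 + a) * a ^ (k + 1) / (1 - a ^ (k + 1)) := by
      rw [hginv]; field_simp; ring
    have hBA : 1 - β ^ (k + 1) ≤ 1 - a ^ (k + 1) := by linarith
    have hcross : (1 + a) * a ^ (k + 1) * (1 - β ^ (k + 1))
        ≤ a * β ^ k * (1 + β) * (1 - a ^ (k + 1)) := by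
      have hp : a ^ (k + 1) = a ^ k * a := pow_succ _ _
      calc (1 + a) * a ^ (k + 1) * (1 - β ^ (k + 1))
          = (1 + a) * a ^ k * (1 - β ^ (k + 1)) * a := by rw [hp]; ring
        _ ≤ (1 + β) * β ^ k * (1 - a ^ (k + 1)) * a := by
            refine mul_le_mul_of_nonneg_right ?_ ha0
            refine mul_le_mul ?_ hBA hB.le
              (mul_nonneg (by linarith) (pow_nonneg hβ0 k))
            exact mul_le_mul (by linarith) hak (pow_nonneg ha0 k) (by linarith)
        _ = a * β ^ k * (1 + β) * (1 - a ^ (k + 1)) := by ring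
    have hdiv : (1 + a) * a ^ (k + 1) / (1 - a ^ (k + 1))
        ≤ a * β ^ k * (1 + β) / (1 - β ^ (k + 1)) :=
      (div_le_div_iff₀ hA hB).mpr hcross
    have hre : a * β ^ k * (1 + β) / (1 - β ^ (k + 1))
        = (β ^ k * (1 + β) / (1 - β ^ (k + 1))) * a := by ring
    have hmul : (1 + β ^ k * (1 + β) / (1 - β ^ (k + 1))) * a
        = a + (β ^ k * (1 + β) / (1 - β ^ (k + 1))) * a := by ring
    linarith [hstep, hdiv, hre, hmul]

/-- Let `X` be a diagonal matrix with positive diagonal entries and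
`L` a Laplacian with `L ⪯ β·X` for some `0 ≤ β < 1`. For odd positive `k`, set
`Z = Σ_{i=0}^{k} X⁻¹·(−L·X⁻¹)^i` and `δ = β^k·(1+β)/(1−β^{k+1})`. Then `Z` is
invertible and `X + L ⪯ Z⁻¹ ⪯ X + (1+δ)·L`. -/
theorem power_series_approx {n : Type*} [Fintype n] [DecidableEq n]
    (X L : Matrix n n ℝ) (β : ℝ) (k : ℕ)
    (hXdiag : ∀ i j, i ≠ j → X i j = 0) (hXpos : ∀ i, 0 < X i i)
    (hL : IsLaplacian L)
    (hβ0 : 0 ≤ β) (hβ1 : β < 1)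
    (hLX : PSDLE L (β • X))
    (hk : Odd k) (hkpos : 0 < k) :
    IsUnit (∑ i ∈ Finset.range (k + 1), X⁻¹ * (-(L * X⁻¹)) ^ i) ∧
    PSDLE (X + L) (∑ i ∈ Finset.range (k + 1), X⁻¹ * (-(L * X⁻¹)) ^ i)⁻¹ ∧
    PSDLE (∑ i ∈ Finset.range (k + 1), X⁻¹ * (-(L * X⁻¹)) ^ i)⁻¹
      (X + (1 + β ^ k * (1 + β) / (1 - β ^ (k + 1))) • L) := by
  obtain ⟨hLs, hLoff, hLrow⟩ := hL
  set Z : Matrix n n ℝ := ∑ i ∈ Finset.range (k + 1), X⁻¹ * (-(L * X⁻¹)) ^ i with hZ_def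
  set s : n → ℝ := fun i => Real.sqrt (X i i) with hs_def
  have hs0 : ∀ i, 0 < s i := fun i => Real.sqrt_pos.mpr (hXpos i)
  have hss : ∀ i, s i * s i = X i i := fun i => Real.mul_self_sqrt (hXpos i).le
  set S : Matrix n n ℝ := Matrix.diagonal s with hS_def
  set T : Matrix n n ℝ := Matrix.diagonal (fun i => (s i)⁻¹) with hT_def
  have cancel : ∀ (A B : Matrix n n ℝ), A * B = 1 → ∀ R : Matrix n n ℝ, A * (B * R) = R := by
    intro A B hAB R; rw [← mul_assoc, hAB, one_mul]
  have hXd : X = Matrix.diagonal (fun i => X i i) := by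
    ext i j
    by_cases h : i = j
    · subst h; simp
    · rw [Matrix.diagonal_apply_ne _ h]; exact hXdiag i j h
  have hST : S * T = 1 := by
    rw [hS_def, hT_def, Matrix.diagonal_mul_diagonal, ← Matrix.diagonal_one]
    exact congrArg Matrix.diagonal (funext fun i => mul_inv_cancel₀ (hs0 i).ne')
  have hTS : T * S = 1 := by
    rw [hS_def, hT_def, Matrix.diagonal_mul_diagonal, ← Matrix.diagonal_one]
    exact congrArg Matrix.diagonal (funext fun i => inv_mul_cancel₀ (hs0 i).ne')
  have hSS : S * S = X := by
    rw [hS_def, Matrix.diagonal_mul_diagonal, hXd]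
    exact congrArg Matrix.diagonal (funext fun i => hss i)
  have hXinv : X⁻¹ = T * T := by
    apply Matrix.inv_eq_right_inv
    calc X * (T * T) = S * ((S * T) * T) := by rw [← hSS]; simp only [mul_assoc]
      _ = 1 := by rw [hST, one_mul]; exact hST
  have hSH : Sᴴ = S := by
    rw [hS_def, Matrix.diagonal_conjTranspose]
    exact congrArg Matrix.diagonal (funext fun i => star_trivial (s i))
  have hTH : Tᴴ = T := by
    rw [hT_def, Matrix.diagonal_conjTranspose]
    exact congrArg Matrix.diagonal (funext fun i => star_trivial ((s i)⁻¹))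
  have hLsymm : Lᴴ = L := by
    rw [Matrix.conjTranspose_eq_transpose_of_trivial]; exact hLs
  have hLpsd : L.PosSemidef := laplacian_posSemidef ⟨hLs, hLoff, hLrow⟩
  set M : Matrix n n ℝ := T * L * T with hM_def
  have hMherm : M.IsHermitian := by
    rw [Matrix.IsHermitian, hM_def, Matrix.conjTranspose_mul, Matrix.conjTranspose_mul,
      hTH, hLsymm]
    simp only [mul_assoc]
  have hMpsd : M.PosSemidef := by
    have := hLpsd.mul_mul_conjTranspose_same T
    rwa [hTH] at this
  have hLeq : L = S * M * S := by
    have h : S * M * S = L := by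
      rw [hM_def]
      calc S * (T * L * T) * S = (S * T) * L * (T * S) := by simp only [mul_assoc]
        _ = L := by rw [hST, hTS, one_mul, mul_one]
    exact h.symm
  have hTXT : T * X * T = 1 := by
    rw [← hSS]
    calc T * (S * S) * T = (T * S) * (S * T) := by simp only [mul_assoc]
      _ = 1 := by rw [hTS, hST, one_mul]
  have hβM : ((β : ℝ) • (1 : Matrix n n ℝ) - M).PosSemidef := by
    have h0 : (β • X - L).PosSemidef := hLX
    have h1 := h0.mul_mul_conjTranspose_same T
    rw [hTH] at h1
    have h2 : T * (β • X - L) * T = β • (1 : Matrix n n ℝ) - M := by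
      calc T * (β • X - L) * T = T * (β • X) * T - T * L * T := by rw [mul_sub, sub_mul]
        _ = β • (T * X * T) - M := by rw [hM_def, mul_smul_comm, smul_mul_assoc]
        _ = β • 1 - M := by rw [hTXT]
    rwa [h2] at h1
  have hU2' := (Matrix.mem_unitaryGroup_iff).mp (hMherm.eigenvectorUnitary).2
  have hU1' := (Matrix.mem_unitaryGroup_iff').mp (hMherm.eigenvectorUnitary).2
  set U : Matrix n n ℝ := (hMherm.eigenvectorUnitary : Matrix n n ℝ) with hU_def
  set μ : n → ℝ := hMherm.eigenvalues with hμ_def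
  have hU2 : U * Uᴴ = 1 := by rw [hU_def, ← Matrix.star_eq_conjTranspose]; exact hU2'
  have hU1 : Uᴴ * U = 1 := by rw [hU_def, ← Matrix.star_eq_conjTranspose]; exact hU1'
  have hspec : M = U * Matrix.diagonal μ * Uᴴ := by
    have h := hMherm.spectral_theorem
    rw [RCLike.ofReal_real_eq_id, Function.id_comp] at h
    rwa [Unitary.conjStarAlgAut_apply, Matrix.star_eq_conjTranspose] at h
  have hμ0 : ∀ j, 0 ≤ μ j := hMpsd.eigenvalues_nonneg
  have hμβ : ∀ j, μ j ≤ β := by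
    intro j
    have hconj := hβM.conjTranspose_mul_mul_same U
    have heq : Uᴴ * (β • (1 : Matrix n n ℝ) - M) * U = Matrix.diagonal (fun j => β - μ j) := by
      rw [hspec]
      calc Uᴴ * (β • 1 - U * Matrix.diagonal μ * Uᴴ) * U
          = β • (Uᴴ * U) - (Uᴴ * U) * Matrix.diagonal μ * (Uᴴ * U) := by
            rw [mul_sub, sub_mul]; congr 1
            · rw [mul_smul_comm, smul_mul_assoc, mul_one]
            · simp only [mul_assoc]
        _ = β • 1 - Matrix.diagonal μ := by rw [hU1, one_mul, mul_one]
        _ = Matrix.diagonal (fun j => β - μ j) := by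
            ext a b; by_cases hab : a = b
            · subst hab; simp
            · simp [Matrix.diagonal_apply_ne _ hab, Matrix.one_apply_ne hab]
    rw [heq] at hconj
    have := Matrix.posSemidef_diagonal_iff.mp hconj j
    linarith
  have hkev : Even (k + 1) := hk.add_one
  set g : n → ℝ := fun j => ∑ i ∈ Finset.range (k + 1), (-μ j) ^ i with hg_def
  have hA' : ∀ j, 0 < 1 - μ j ^ (k + 1) := by
    intro j
    have h1 : μ j ^ (k + 1) ≤ β ^ (k + 1) := pow_le_pow_left₀ (hμ0 j) (hμβ j) _
    have h2 : β ^ (k + 1) < 1 := pow_lt_one₀ hβ0 hβ1 (by omega)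
    linarith
  have hB : 0 < 1 - β ^ (k + 1) := by
    have h2 : β ^ (k + 1) < 1 := pow_lt_one₀ hβ0 hβ1 (by omega)
    linarith
  have hgeq : ∀ j, g j * (1 + μ j) = 1 - μ j ^ (k + 1) := by
    intro j
    have h1 := geom_sum_mul (-μ j) (k + 1)
    have h2 : (-μ j) ^ (k + 1) = μ j ^ (k + 1) := hkev.neg_pow _
    rw [h2] at h1
    simp only [hg_def]
    linear_combination -h1
  have hgpos : ∀ j, 0 < g j := by
    intro j
    have h1 : 0 < 1 + μ j := by have := hμ0 j; linarith
    have h2 := hgeq j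
    nlinarith [hA' j]
  have hginv : ∀ j, (g j)⁻¹ = (1 + μ j) / (1 - μ j ^ (k + 1)) := by
    intro j
    rw [eq_div_iff (hA' j).ne', ← hgeq j, ← mul_assoc, inv_mul_cancel₀ (hgpos j).ne', one_mul]
  have hnegLX : -(L * X⁻¹) = S * (-M) * T := by
    rw [hXinv, hLeq]
    calc -(S * M * S * (T * T)) = -(S * M * ((S * T) * T)) := by simp only [mul_assoc]
      _ = -(S * M * T) := by rw [hST, one_mul]
      _ = S * (-M) * T := by rw [mul_neg, neg_mul]
  have hnegM : -M = U * Matrix.diagonal (fun j => -μ j) * Uᴴ := by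
    rw [hspec]
    have hd : Matrix.diagonal (fun j => -μ j) = -Matrix.diagonal μ := by
      ext a b; by_cases hab : a = b
      · subst hab; simp
      · simp [Matrix.diagonal_apply_ne _ hab]
    rw [hd, mul_neg, neg_mul]
  have hterm : ∀ i, X⁻¹ * (-(L * X⁻¹)) ^ i
      = T * U * Matrix.diagonal (fun j => (-μ j) ^ i) * Uᴴ * T := by
    intro i
    calc X⁻¹ * (-(L * X⁻¹)) ^ i = (T * T) * (S * (-M) ^ i * T) := by
          rw [hnegLX, conj_pow_aux S T (-M) hST hTS i, hXinv]
      _ = T * ((T * S) * ((-M) ^ i * T)) := by simp only [mul_assoc]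
      _ = T * ((-M) ^ i * T) := by rw [hTS, one_mul]
      _ = T * (U * Matrix.diagonal (fun j => (-μ j) ^ i) * Uᴴ * T) := by
          rw [hnegM, conj_pow_aux U Uᴴ _ hU2 hU1 i, Matrix.diagonal_pow]
          rfl
      _ = T * U * Matrix.diagonal (fun j => (-μ j) ^ i) * Uᴴ * T := by simp only [mul_assoc]
  have hZ : Z = T * U * Matrix.diagonal g * Uᴴ * T := by
    rw [hZ_def]
    calc (∑ i ∈ Finset.range (k + 1), X⁻¹ * (-(L * X⁻¹)) ^ i)
        = ∑ i ∈ Finset.range (k + 1),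
            T * U * Matrix.diagonal (fun j => (-μ j) ^ i) * (Uᴴ * T) := by
          refine Finset.sum_congr rfl fun i _ => ?_
          rw [hterm i]; simp only [mul_assoc]
      _ = T * U * (∑ i ∈ Finset.range (k + 1), Matrix.diagonal (fun j => (-μ j) ^ i)) * (Uᴴ * T) := by
          rw [← Finset.sum_mul, ← Finset.mul_sum]
      _ = T * U * Matrix.diagonal g * (Uᴴ * T) := by rw [diagonal_sum_aux]
      _ = T * U * Matrix.diagonal g * Uᴴ * T := by simp only [mul_assoc]
  set w1 : n → ℝ := fun j => (g j)⁻¹ with hw1_def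
  set W : Matrix n n ℝ := S * U * Matrix.diagonal w1 * Uᴴ * S with hW_def
  have hGg : Matrix.diagonal g * Matrix.diagonal w1 = 1 := by
    rw [hw1_def, Matrix.diagonal_mul_diagonal, ← Matrix.diagonal_one]
    exact congrArg Matrix.diagonal (funext fun j => mul_inv_cancel₀ (hgpos j).ne')
  have hgG : Matrix.diagonal w1 * Matrix.diagonal g = 1 := by
    rw [hw1_def, Matrix.diagonal_mul_diagonal, ← Matrix.diagonal_one]
    exact congrArg Matrix.diagonal (funext fun j => inv_mul_cancel₀ (hgpos j).ne')
  have hZW : Z * W = 1 := by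
    rw [hZ, hW_def]
    simp only [mul_assoc]
    rw [cancel T S hTS, cancel Uᴴ U hU1, cancel _ _ hGg, cancel U Uᴴ hU2, hTS]
  have hWZ : W * Z = 1 := by
    rw [hZ, hW_def]
    simp only [mul_assoc]
    rw [cancel S T hST, cancel Uᴴ U hU1, cancel _ _ hgG, cancel U Uᴴ hU2, hST]
  have hZunit : IsUnit Z := ⟨⟨Z, W, hZW, hWZ⟩, rfl⟩
  have hZinv : Z⁻¹ = W := Matrix.inv_eq_right_inv hZW
  set C : Matrix n n ℝ := S * U with hC_def
  have hCH : Cᴴ = Uᴴ * S := by rw [hC_def, Matrix.conjTranspose_mul, hSH]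
  have hconj : ∀ v : n → ℝ, C * Matrix.diagonal v * Cᴴ = S * U * Matrix.diagonal v * Uᴴ * S := by
    intro v; rw [hCH, hC_def]; simp only [mul_assoc]
  have hW' : W = C * Matrix.diagonal w1 * Cᴴ := by rw [hconj w1]
  have hX' : X = C * Matrix.diagonal (fun _ => (1 : ℝ)) * Cᴴ := by
    rw [hconj, Matrix.diagonal_one, mul_one]
    calc X = S * S := hSS.symm
      _ = S * (U * (Uᴴ * S)) := by rw [cancel U Uᴴ hU2]
      _ = S * U * Uᴴ * S := by simp only [mul_assoc]
  have hL' : L = C * Matrix.diagonal μ * Cᴴ := by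
    rw [hconj μ, hLeq, hspec]; simp only [mul_assoc]
  have hXL : X + L = C * Matrix.diagonal (fun j => 1 + μ j) * Cᴴ := by
    rw [hX', hL']
    have hd : Matrix.diagonal (fun j => 1 + μ j)
        = Matrix.diagonal (fun _ => (1 : ℝ)) + Matrix.diagonal μ := by
      ext a b; by_cases hab : a = b
      · subst hab; simp
      · simp [Matrix.diagonal_apply_ne _ hab, Matrix.one_apply_ne hab]
    rw [hd]
    noncomm_ring
  refine ⟨hZunit, ?_, ?_⟩
  · show (Z⁻¹ - (X + L)).PosSemidef
    rw [hZinv, hXL, hW']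
    refine conj_sub_psd C _ _ fun j => ?_
    exact (geom_scalar_bounds β (μ j) (g j) k hβ0 hβ1 (hμ0 j) (hμβ j) (hgeq j)).1
  · show ((X + (1 + β ^ k * (1 + β) / (1 - β ^ (k + 1))) • L) - Z⁻¹).PosSemidef
    have hcL : (1 + β ^ k * (1 + β) / (1 - β ^ (k + 1))) • L
        = C * Matrix.diagonal (fun j => (1 + β ^ k * (1 + β) / (1 - β ^ (k + 1))) * μ j) * Cᴴ := by
      have hd : Matrix.diagonal (fun j => (1 + β ^ k * (1 + β) / (1 - β ^ (k + 1))) * μ j)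
          = (1 + β ^ k * (1 + β) / (1 - β ^ (k + 1))) • Matrix.diagonal μ := by
        ext a b; by_cases hab : a = b
        · subst hab; simp
        · simp [Matrix.diagonal_apply_ne _ hab]
      rw [hd, mul_smul_comm, smul_mul_assoc]
      rw [hL']
    have hXcL : X + (1 + β ^ k * (1 + β) / (1 - β ^ (k + 1))) • L
        = C * Matrix.diagonal
            (fun j => 1 + (1 + β ^ k * (1 + β) / (1 - β ^ (k + 1))) * μ j) * Cᴴ := by
      rw [hX', hcL]
      have hd : Matrix.diagonal (fun j => 1 + (1 + β ^ k * (1 + β) / (1 - β ^ (k + 1))) * μ j)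
          = Matrix.diagonal (fun _ => (1 : ℝ))
            + Matrix.diagonal (fun j => (1 + β ^ k * (1 + β) / (1 - β ^ (k + 1))) * μ j) := by
        ext a b; by_cases hab : a = b
        · subst hab; simp
        · simp [Matrix.diagonal_apply_ne _ hab, Matrix.one_apply_ne hab]
      rw [hd]
      noncomm_ring
    rw [hZinv, hXcL, hW']
    refine conj_sub_psd C _ _ fun j => ?_
    exact (geom_scalar_bounds β (μ j) (g j) k hβ0 hβ1 (hμ0 j) (hμβ j) (hgeq j)).2
end
end

section
/- Let M be an SDDM matrix with indices partitioned into blocks F and C, and let M_{FF} = X_{FF} + L_{FF} be the unique decomposition with X_{FF} a nonnegative diagonal matrix and L_{FF} a Laplacian. Assume X_{FF} has positive diagonal entries and L_{FF} ⪯ β·X_{FF} for some 0 ≤ β ≤ 1/2. Let k be an odd positive integer and Z^{(k)}_{FF} = Σ_{i=0}^{k} X_{FF}^{−1}·(−L_{FF}·X_{FF}^{−1})^{i}. Then M ⪯ M̂ ⪯ (1 + 2β^{k})·M, where M̂ is the matrix obtained from M by replacing its FF block with (Z^{(k)}_{FF})^{−1}. -/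
open Matrix BigOperators Finset
open scoped Classical

noncomputable section

lemma sum_erase_comm' {n : Type*} [Fintype n] [DecidableEq n] (f : n → n → ℝ) :
    ∑ i, ∑ j ∈ Finset.univ.erase i, f i j = ∑ j, ∑ i ∈ Finset.univ.erase j, f i j := by
  simp only [Finset.sum_erase_eq_sub (Finset.mem_univ _)]
  rw [Finset.sum_sub_distrib, Finset.sum_sub_distrib, Finset.sum_comm]

lemma posSemidef_of_dd {n : Type*} [Fintype n] [DecidableEq n] (A : Matrix n n ℝ)
    (hsym : A.IsHermitian)
    (hdom : ∀ i, ∑ j ∈ Finset.univ.erase i, |A i j| ≤ A i i) : A.PosSemidef := by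
  have hs : ∀ i j, A j i = A i j := fun i j => by
    have := congrFun (congrFun hsym.eq i) j
    simpa [Matrix.conjTranspose_apply] using this
  refine Matrix.PosSemidef.of_dotProduct_mulVec_nonneg hsym fun x => ?_
  have hx : star x = x := by simp
  rw [hx]
  have hQ : x ⬝ᵥ A *ᵥ x
      = ∑ i, (A i i * x i ^ 2 + ∑ j ∈ Finset.univ.erase i, x i * (A i j * x j)) := by
    simp only [dotProduct, mulVec]
    refine Finset.sum_congr rfl fun i _ => ?_
    rw [Finset.mul_sum,
      ← Finset.add_sum_erase _ (fun j => x i * (A i j * x j)) (Finset.mem_univ i)]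
    ring_nf
  have hswap : ∑ i, ∑ j ∈ Finset.univ.erase i, |A i j| * ((x i ^ 2 + x j ^ 2) / 2)
      = ∑ i, (∑ j ∈ Finset.univ.erase i, |A i j|) * x i ^ 2 := by
    have e1 : ∀ i, ∑ j ∈ Finset.univ.erase i, |A i j| * ((x i ^ 2 + x j ^ 2) / 2)
        = ∑ j ∈ Finset.univ.erase i, (|A i j| * x i ^ 2 / 2 + |A i j| * x j ^ 2 / 2) := by
      intro i; exact Finset.sum_congr rfl fun j _ => by ring
    simp only [e1, Finset.sum_add_distrib]
    have e2 : ∑ i, ∑ j ∈ Finset.univ.erase i, |A i j| * x j ^ 2 / 2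
        = ∑ i, ∑ j ∈ Finset.univ.erase i, |A i j| * x i ^ 2 / 2 := by
      rw [sum_erase_comm' (fun i j => |A i j| * x j ^ 2 / 2)]
      refine Finset.sum_congr rfl fun j _ => Finset.sum_congr rfl fun i _ => by rw [hs i j]
    rw [e2, ← Finset.sum_add_distrib]
    refine Finset.sum_congr rfl fun i _ => ?_
    rw [← Finset.sum_add_distrib, Finset.sum_mul]
    exact Finset.sum_congr rfl fun j _ => by ring
  rw [hQ, Finset.sum_add_distrib]
  have h1 : ∑ i, -(∑ j ∈ Finset.univ.erase i, |A i j| * ((x i ^ 2 + x j ^ 2) / 2))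
      ≤ ∑ i, ∑ j ∈ Finset.univ.erase i, x i * (A i j * x j) := by
    refine Finset.sum_le_sum fun i _ => ?_
    rw [← Finset.sum_neg_distrib]
    refine Finset.sum_le_sum fun j _ => ?_
    have h1 : |x i * (A i j * x j)| ≤ |A i j| * ((x i ^ 2 + x j ^ 2) / 2) := by
      rw [abs_mul, abs_mul]
      have hr : |x i| * (|A i j| * |x j|) = |A i j| * (|x i| * |x j|) := by ring
      rw [hr]
      have h2 : |x i| * |x j| ≤ (x i ^ 2 + x j ^ 2) / 2 := by
        nlinarith [sq_nonneg (|x i| - |x j|), sq_abs (x i), sq_abs (x j)]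
      exact mul_le_mul_of_nonneg_left h2 (abs_nonneg _)
    linarith [neg_abs_le (x i * (A i j * x j))]
  rw [Finset.sum_neg_distrib, hswap] at h1
  have h3 : ∑ i, (∑ j ∈ Finset.univ.erase i, |A i j|) * x i ^ 2
      ≤ ∑ i, A i i * x i ^ 2 :=
    Finset.sum_le_sum fun i _ => mul_le_mul_of_nonneg_right (hdom i) (sq_nonneg _)
  linarith

/-- Conjugation of a diagonal matrix by `V`. -/
def conjD {n : Type*} [Fintype n] [DecidableEq n] (V : Matrix n n ℝ) (g : n → ℝ) :
    Matrix n n ℝ := V * Matrix.diagonal g * star V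

section ConjD
variable {n : Type*} [Fintype n] [DecidableEq n] {V : Matrix n n ℝ}

lemma conjD_mul (hV' : star V * V = 1) (g h : n → ℝ) :
    conjD V g * conjD V h = conjD V (g * h) := by
  unfold conjD
  have e : V * Matrix.diagonal g * star V * (V * Matrix.diagonal h * star V)
      = V * (Matrix.diagonal g * ((star V * V) * (Matrix.diagonal h * star V))) := by
    simp only [mul_assoc]
  rw [e, hV', one_mul,
    show Matrix.diagonal (g * h) = Matrix.diagonal g * Matrix.diagonal h from
      (Matrix.diagonal_mul_diagonal g h).symm]
  simp only [mul_assoc]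

lemma conjD_one (hV : V * star V = 1) : conjD V (1 : n → ℝ) = 1 := by
  unfold conjD
  have : Matrix.diagonal (1 : n → ℝ) = 1 := Matrix.diagonal_one
  rw [this, mul_one, hV]

lemma conjD_add (g h : n → ℝ) : conjD V g + conjD V h = conjD V (g + h) := by
  unfold conjD
  rw [show Matrix.diagonal (g + h) = Matrix.diagonal g + Matrix.diagonal h from
    map_add (Matrix.diagonalAddMonoidHom n ℝ) g h]
  rw [mul_add, add_mul]

lemma conjD_sub (g h : n → ℝ) : conjD V g - conjD V h = conjD V (g - h) := by
  unfold conjD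
  rw [show Matrix.diagonal (g - h) = Matrix.diagonal g - Matrix.diagonal h from
    map_sub (Matrix.diagonalAddMonoidHom n ℝ) g h]
  rw [mul_sub, sub_mul]

lemma conjD_smul (c : ℝ) (g : n → ℝ) : c • conjD V g = conjD V (c • g) := by
  unfold conjD
  rw [Matrix.diagonal_smul, mul_smul_comm, smul_mul_assoc]

lemma conjD_pow (hV : V * star V = 1) (hV' : star V * V = 1) (g : n → ℝ) (m : ℕ) :
    (conjD V g) ^ m = conjD V (g ^ m) := by
  induction m with
  | zero => simp only [pow_zero]; exact (conjD_one hV).symm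
  | succ m ih => rw [pow_succ, ih, conjD_mul hV', pow_succ]

lemma conjD_sum {ι : Type*} (s : Finset ι) (g : ι → n → ℝ) :
    ∑ m ∈ s, conjD V (g m) = conjD V (∑ m ∈ s, g m) := by
  unfold conjD
  rw [show Matrix.diagonal (∑ m ∈ s, g m) = ∑ m ∈ s, Matrix.diagonal (g m) from
    map_sum (Matrix.diagonalAddMonoidHom n ℝ) _ _]
  rw [Finset.mul_sum, Finset.sum_mul]

lemma posSemidef_conjD_iff (hV : V * star V = 1) (hV' : star V * V = 1) (g : n → ℝ) :
    (conjD V g).PosSemidef ↔ ∀ i, 0 ≤ g i := by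
  constructor
  · intro h i
    have h2 := h.dotProduct_mulVec_nonneg (V *ᵥ Pi.single i 1)
    have hx : star (V *ᵥ Pi.single i 1) = V *ᵥ Pi.single i 1 := by simp
    rw [hx] at h2
    have e1 : conjD V g *ᵥ (V *ᵥ Pi.single i 1)
        = V *ᵥ Pi.single i (g i * 1) := by
      unfold conjD
      rw [Matrix.mulVec_mulVec, show V * Matrix.diagonal g * star V * V
          = V * Matrix.diagonal g * (star V * V) from by simp only [mul_assoc], hV', mul_one,
        ← Matrix.mulVec_mulVec, Matrix.diagonal_mulVec_single]
    rw [e1] at h2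
    have hVT : Vᵀ * V = 1 := by
      rw [← hV']
      congr 1
    have e2 : (V *ᵥ Pi.single i 1) ⬝ᵥ (V *ᵥ Pi.single i (g i * 1)) = g i := by
      rw [show (V *ᵥ Pi.single i 1) ⬝ᵥ (V *ᵥ Pi.single i (g i * 1))
          = ((V *ᵥ Pi.single i 1) ᵥ* V) ⬝ᵥ Pi.single i (g i * 1) from
        (Matrix.dotProduct_mulVec _ _ _)]
      have : (V *ᵥ Pi.single i 1) ᵥ* V = (Vᵀ * V) *ᵥ Pi.single i 1 := by
        rw [← Matrix.mulVec_transpose, Matrix.mulVec_mulVec]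
      rw [this, hVT]
      simp
    rw [e2] at h2
    exact h2
  · intro hg
    have := (Matrix.PosSemidef.diagonal (fun i => hg i)).mul_mul_conjTranspose_same V
    simpa [conjD, Matrix.star_eq_conjTranspose] using this

lemma conjD_inv (hV : V * star V = 1) (hV' : star V * V = 1) (g : n → ℝ)
    (hg : ∀ i, g i ≠ 0) : (conjD V g)⁻¹ = conjD V g⁻¹ := by
  apply Matrix.inv_eq_right_inv
  rw [conjD_mul hV', show g * g⁻¹ = 1 from funext fun i => mul_inv_cancel₀ (hg i),
    conjD_one hV]

end ConjD

/-- Scalar facts about the geometric sum. -/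
lemma scalar_facts (β y : ℝ) (k : ℕ) (hk : Odd k) (hkpos : 0 < k)
    (hy0 : 0 ≤ y) (hyβ : y ≤ β) (hβ0 : 0 ≤ β) (hβ : β ≤ 1 / 2) :
    0 < ∑ m ∈ Finset.range (k + 1), (-y) ^ m ∧
    1 + y ≤ (∑ m ∈ Finset.range (k + 1), (-y) ^ m)⁻¹ ∧
    (∑ m ∈ Finset.range (k + 1), (-y) ^ m)⁻¹ ≤ 1 + y + 2 * β ^ k * y := by
  set s := ∑ m ∈ Finset.range (k + 1), (-y) ^ m with hs
  have hy1 : y ≤ 1 / 2 := le_trans hyβ hβ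
  have hgeom : (1 + y) * s = 1 - y ^ (k + 1) := by
    have h := geom_sum_mul (-y) (k + 1)
    have he : Even (k + 1) := Odd.add_one hk
    rw [he.neg_pow] at h
    linear_combination -h
  have hyk14 : y ^ (k + 1) ≤ 1 / 4 := by
    have h2 : y ^ (k + 1) ≤ y ^ 2 :=
      pow_le_pow_of_le_one hy0 (by linarith) (by omega)
    have h3 : y ^ 2 ≤ (1 / 2 : ℝ) ^ 2 := by nlinarith
    nlinarith
  have hykn : 0 ≤ y ^ (k + 1) := pow_nonneg hy0 _
  have hspos : 0 < s := by
    by_contra h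
    push_neg at h
    have : (1 + y) * s ≤ 0 := mul_nonpos_of_nonneg_of_nonpos (by linarith) h
    linarith
  have hsval : s = (1 - y ^ (k + 1)) / (1 + y) := by
    field_simp
    linarith [hgeom]
  have hsinv : s⁻¹ = (1 + y) / (1 - y ^ (k + 1)) := by
    rw [hsval, inv_div]
  have hden : (0:ℝ) < 1 - y ^ (k + 1) := by linarith
  refine ⟨hspos, ?_, ?_⟩
  · rw [hsinv, le_div_iff₀ hden]
    nlinarith
  · rw [hsinv, div_le_iff₀ hden]
    have hpk : y ^ (k + 1) ≤ β ^ k * y := by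
      have h1 : y ^ k ≤ β ^ k := pow_le_pow_left₀ hy0 hyβ k
      calc y ^ (k + 1) = y ^ k * y := by rw [pow_succ]
        _ ≤ β ^ k * y := mul_le_mul_of_nonneg_right h1 hy0
    have hbk : (0:ℝ) ≤ β ^ k := pow_nonneg hβ0 k
    have hbky : (0:ℝ) ≤ β ^ k * y := mul_nonneg hbk hy0
    nlinarith [mul_le_mul_of_nonneg_left hyk14 hbky,
      mul_le_mul_of_nonneg_left hpk (by linarith : (0:ℝ) ≤ 1 + y)]

lemma posSemidef_smul_of_nonneg {n : Type*} [Fintype n] {A : Matrix n n ℝ}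
    (hA : A.PosSemidef) {c : ℝ} (hc : 0 ≤ c) : (c • A).PosSemidef := by
  refine Matrix.PosSemidef.of_dotProduct_mulVec_nonneg ?_ ?_
  · show (c • A)ᴴ = c • A
    rw [Matrix.conjTranspose_smul, star_trivial, hA.1.eq]
  · intro x
    rw [Matrix.smul_mulVec, dotProduct_smul]
    exact mul_nonneg hc (hA.dotProduct_mulVec_nonneg x)

lemma posSemidef_fromBlocks_left {F C : Type*} [Fintype F] [Fintype C]
    {E : Matrix F F ℝ} (hE : E.PosSemidef) :
    (Matrix.fromBlocks E 0 0 0 : Matrix (F ⊕ C) (F ⊕ C) ℝ).PosSemidef := by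
  refine Matrix.PosSemidef.of_dotProduct_mulVec_nonneg ?_ ?_
  · show (Matrix.fromBlocks E 0 0 0)ᴴ = Matrix.fromBlocks E 0 0 0
    rw [Matrix.fromBlocks_conjTranspose]
    have h := hE.1.eq
    have h2 : Eᴴ = Eᵀ := by ext i j; simp [Matrix.conjTranspose_apply]
    rw [h2] at h
    simp [h]
  · intro x
    have hx : star x = x := by simp
    rw [hx, Matrix.fromBlocks_mulVec]
    have h2 := hE.dotProduct_mulVec_nonneg (x ∘ Sum.inl)
    have hx2 : star (x ∘ Sum.inl) = x ∘ Sum.inl := by simp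
    rw [hx2] at h2
    simpa [dotProduct, Fintype.sum_sum_type, Matrix.mulVec] using h2

/-- Let `M = [[M_FF, M_FC],[M_CF, M_CC]]` be an SDDM matrix with
`M_FF = X + L`, `X` a nonnegative diagonal matrix with positive diagonal,
`L` a Laplacian, `L ⪯ β·X`, `0 ≤ β ≤ 1/2`. For odd positive `k` and
`Z = Σ_{i=0}^{k} X⁻¹·(−L·X⁻¹)^i`, replacing the `FF` block of `M` by `Z⁻¹`
gives `M̂` with `M ⪯ M̂ ⪯ (1+2β^k)·M`. -/
theorem replace_FF_block {F C : Type*} [Fintype F] [Fintype C] [DecidableEq F] [DecidableEq C]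
    (X L : Matrix F F ℝ) (MFC : Matrix F C ℝ) (MCF : Matrix C F ℝ) (MCC : Matrix C C ℝ)
    (β : ℝ) (k : ℕ)
    (hXdiag : ∀ i j, i ≠ j → X i j = 0) (hXnn : ∀ i, 0 ≤ X i i) (hXpos : ∀ i, 0 < X i i)
    (hL : IsLaplacian L)
    (hM : IsSDDM (Matrix.fromBlocks (X + L) MFC MCF MCC))
    (hβ0 : 0 ≤ β) (hβ : β ≤ 1 / 2)
    (hLX : PSDLE L (β • X))
    (hk : Odd k) (hkpos : 0 < k) :
    PSDLE (Matrix.fromBlocks (X + L) MFC MCF MCC)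
        (Matrix.fromBlocks (∑ i ∈ Finset.range (k + 1), X⁻¹ * (-(L * X⁻¹)) ^ i)⁻¹ MFC MCF MCC) ∧
    PSDLE (Matrix.fromBlocks (∑ i ∈ Finset.range (k + 1), X⁻¹ * (-(L * X⁻¹)) ^ i)⁻¹ MFC MCF MCC)
        ((1 + 2 * β ^ k) • Matrix.fromBlocks (X + L) MFC MCF MCC) := by

  obtain ⟨hLsym, hLnonpos, hLrow⟩ := hL
  obtain ⟨hMsym, hMpd, hMnonpos, hMdd⟩ := hM
  -- diagonal data
  set d : F → ℝ := fun i => X i i with hd_def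
  have hd : ∀ i, 0 < d i := hXpos
  have hXd : X = Matrix.diagonal d := by
    ext i j
    by_cases hij : i = j
    · subst hij; simp [Matrix.diagonal, hd_def]
    · simp [Matrix.diagonal, hij, hXdiag i j hij]
  set w : F → ℝ := fun i => Real.sqrt (d i) with hw_def
  have hw : ∀ i, 0 < w i := fun i => Real.sqrt_pos.2 (hd i)
  have hww : ∀ i, w i * w i = d i := fun i => Real.mul_self_sqrt (hd i).le
  set R : Matrix F F ℝ := Matrix.diagonal w with hR_def
  set Ri : Matrix F F ℝ := Matrix.diagonal w⁻¹ with hRi_def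
  have hdiagone : ∀ (v : F → ℝ), (∀ i, v i = 1) → Matrix.diagonal v = 1 := fun v hv => by
    rw [show v = 1 from funext fun i => hv i]
    exact Matrix.diagonal_one
  have hRRi : R * Ri = 1 := by
    rw [hR_def, hRi_def, Matrix.diagonal_mul_diagonal]
    exact hdiagone _ fun i => by simp [Pi.inv_apply]; exact mul_inv_cancel₀ (hw i).ne'
  have hRiR : Ri * R = 1 := by
    rw [hR_def, hRi_def, Matrix.diagonal_mul_diagonal]
    exact hdiagone _ fun i => by simp [Pi.inv_apply]; exact inv_mul_cancel₀ (hw i).ne'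
  have hRR : R * R = X := by
    rw [hR_def, Matrix.diagonal_mul_diagonal, hXd]
    exact congrArg Matrix.diagonal (funext fun i => hww i)
  have hXinv : X⁻¹ = Ri * Ri := by
    apply Matrix.inv_eq_right_inv
    rw [hXd, hRi_def, Matrix.diagonal_mul_diagonal, Matrix.diagonal_mul_diagonal]
    refine hdiagone _ fun i => ?_
    show d i * (w⁻¹ i * w⁻¹ i) = 1
    simp only [Pi.inv_apply]
    rw [← hww i]
    field_simp
    exact div_self (hw i).ne'
  have hRst : star R = R := by
    rw [Matrix.star_eq_conjTranspose, hR_def, Matrix.diagonal_conjTranspose]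
    simp
  have hRist : star Ri = Ri := by
    rw [Matrix.star_eq_conjTranspose, hRi_def, Matrix.diagonal_conjTranspose]
    simp
  -- L facts
  have hLh : L.IsHermitian := by
    show Lᴴ = L
    ext i j
    rw [Matrix.conjTranspose_apply, star_trivial]
    exact congrFun (congrFun hLsym i) j
  have hLdiag : ∀ i, ∑ j ∈ Finset.univ.erase i, |L i j| = L i i := by
    intro i
    have h0 := hLrow i
    rw [← Finset.add_sum_erase _ (fun j => L i j) (Finset.mem_univ i)] at h0
    have he : ∀ j ∈ Finset.univ.erase i, |L i j| = -(L i j) := fun j hj =>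
      abs_of_nonpos (hLnonpos i j (Ne.symm (Finset.ne_of_mem_erase hj)))
    rw [Finset.sum_congr rfl he, Finset.sum_neg_distrib]
    linarith
  have hLpsd : L.PosSemidef := posSemidef_of_dd L hLh (fun i => le_of_eq (hLdiag i))
  -- Y and its spectral decomposition
  set Y : Matrix F F ℝ := Ri * L * Ri with hY_def
  have hYpsd : Y.PosSemidef := by
    have h := hLpsd.mul_mul_conjTranspose_same Ri
    rwa [show Riᴴ = Ri from by rw [← Matrix.star_eq_conjTranspose]; exact hRist] at h
  have hYh : Y.IsHermitian := hYpsd.1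
  have hRXiR : Ri * X * Ri = 1 := by
    rw [show Ri * X * Ri = Ri * (X * Ri) from by rw [mul_assoc], ← hRR,
      show R * R * Ri = R * (R * Ri) from by rw [mul_assoc], hRRi, mul_one, hRiR]
  have hbY : (β • (1 : Matrix F F ℝ) - Y).PosSemidef := by
    unfold PSDLE at hLX
    have h := hLX.mul_mul_conjTranspose_same Ri
    rw [show Riᴴ = Ri from by rw [← Matrix.star_eq_conjTranspose]; exact hRist] at h
    have e : Ri * (β • X - L) * Ri = β • (1 : Matrix F F ℝ) - Y := by
      rw [Matrix.mul_sub, Matrix.sub_mul, hY_def]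
      congr 1
      rw [Matrix.mul_smul, Matrix.smul_mul, hRXiR]
    rwa [e] at h
  set U : Matrix F F ℝ := (hYh.eigenvectorUnitary : Matrix F F ℝ) with hU_def
  have hU1 : U * star U = 1 := (Matrix.mem_unitaryGroup_iff).mp hYh.eigenvectorUnitary.2
  have hU2 : star U * U = 1 := (Matrix.mem_unitaryGroup_iff').mp hYh.eigenvectorUnitary.2
  set lam : F → ℝ := hYh.eigenvalues with hlam_def
  have hYc : Y = conjD U lam := by
    have h := hYh.spectral_theorem
    rw [show RCLike.ofReal ∘ hYh.eigenvalues = lam from by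
      funext i; simp [hlam_def]] at h
    exact h
  have hlam0 : ∀ i, 0 ≤ lam i := fun i => hYpsd.eigenvalues_nonneg i
  have hlamβ : ∀ i, lam i ≤ β := by
    have hc : conjD U (fun i => β - lam i) = β • (1 : Matrix F F ℝ) - Y := by
      rw [show (fun i => β - lam i) = (β • (1 : F → ℝ)) - lam from funext fun i => by
        simp [Pi.smul_apply, Pi.sub_apply], ← conjD_sub, ← conjD_smul, conjD_one hU1, hYc]
    intro i
    have h := (posSemidef_conjD_iff hU1 hU2 _).1 (hc ▸ hbY) i
    linarith
  -- the geometric sum S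
  set sfun : F → ℝ := fun i => ∑ m ∈ Finset.range (k + 1), (-(lam i)) ^ m with hsfun_def
  have hsf : ∀ i, 0 < sfun i ∧ 1 + lam i ≤ (sfun i)⁻¹ ∧
      (sfun i)⁻¹ ≤ 1 + lam i + 2 * β ^ k * lam i := fun i =>
    scalar_facts β (lam i) k hk hkpos (hlam0 i) (hlamβ i) hβ0 hβ
  set S : Matrix F F ℝ := ∑ m ∈ Finset.range (k + 1), (-Y) ^ m with hS_def
  have hnegY : -Y = conjD U (-lam) := by
    rw [show -Y = (-1 : ℝ) • Y from by simp, hYc, conjD_smul]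
    congr 1
    funext i
    simp
  have hS : S = conjD U sfun := by
    rw [hS_def]
    have e1 : ∀ m, (-Y) ^ m = conjD U ((-lam) ^ m) := fun m => by
      rw [hnegY, conjD_pow hU1 hU2]
    rw [Finset.sum_congr rfl (fun m _ => e1 m), conjD_sum]
    rw [show (∑ m ∈ Finset.range (k + 1), (-lam) ^ m) = sfun from funext fun i => by
      simp [hsfun_def]]
  -- Z = Ri * S * Ri
  set Z : Matrix F F ℝ := ∑ i ∈ Finset.range (k + 1), X⁻¹ * (-(L * X⁻¹)) ^ i with hZ_def
  set Cm : Matrix F F ℝ := -(L * X⁻¹) with hCm_def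
  have hRnY : R * (-Y) = Cm * R := by
    rw [hY_def, hCm_def]
    have e1 : R * -(Ri * L * Ri) = -(L * Ri) := by
      rw [Matrix.mul_neg]
      congr 1
      rw [show R * (Ri * L * Ri) = R * Ri * (L * Ri) from by simp only [mul_assoc], hRRi,
        one_mul]
    have e2 : -(L * X⁻¹) * R = -(L * Ri) := by
      rw [Matrix.neg_mul]
      congr 1
      rw [hXinv, show L * (Ri * Ri) * R = L * (Ri * (Ri * R)) from by simp only [mul_assoc],
        hRiR, mul_one]
    rw [e1, e2]
  have hpow : ∀ m, (-Y) ^ m = Ri * Cm ^ m * R := by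
    intro m
    induction m with
    | zero => rw [pow_zero, pow_zero, mul_one, hRiR]
    | succ m ih =>
      rw [pow_succ, ih, pow_succ, show Ri * Cm ^ m * R * -Y = Ri * Cm ^ m * (R * -Y) from by
        simp only [mul_assoc], hRnY, ← mul_assoc, ← mul_assoc]
  have hZS : Z = Ri * S * Ri := by
    rw [hZ_def, hS_def, Finset.mul_sum, Finset.sum_mul]
    refine Finset.sum_congr rfl fun m _ => ?_
    rw [hpow m, hXinv]
    simp only [mul_assoc, hRRi, mul_one]
  have hsne : ∀ i, sfun i ≠ 0 := fun i => (hsf i).1.ne'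
  have hSinv : S⁻¹ = conjD U sfun⁻¹ := by
    rw [hS]; exact conjD_inv hU1 hU2 _ hsne
  have hSSinv : S * S⁻¹ = 1 := by
    rw [hSinv, hS, conjD_mul hU2,
      show sfun * sfun⁻¹ = 1 from funext fun i => mul_inv_cancel₀ (hsne i), conjD_one hU1]
  have hZinv : Z⁻¹ = R * S⁻¹ * R := by
    apply Matrix.inv_eq_right_inv
    rw [hZS]
    rw [show Ri * S * Ri * (R * S⁻¹ * R) = Ri * (S * ((Ri * R) * S⁻¹)) * R from by
      simp only [mul_assoc], hRiR, one_mul, hSSinv, mul_one, hRiR]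
  -- expressing X + L and L via R-conjugation
  have hRYR : R * Y * R = L := by
    rw [hY_def, show R * (Ri * L * Ri) * R = (R * Ri) * L * (Ri * R) from by
      simp only [mul_assoc], hRRi, hRiR, one_mul, mul_one]
  have hXL : X + L = R * conjD U (fun i => 1 + lam i) * R := by
    rw [show (fun i => 1 + lam i) = (1 : F → ℝ) + lam from funext fun i => by simp,
      ← conjD_add, conjD_one hU1, Matrix.mul_add, Matrix.add_mul, mul_one, hRR, ← hYc, hRYR]
  set E : Matrix F F ℝ := Z⁻¹ - (X + L) with hE_def
  have hE : E = R * conjD U (fun i => (sfun i)⁻¹ - (1 + lam i)) * R := by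
    rw [hE_def, hZinv, hSinv, hXL,
      show R * conjD U sfun⁻¹ * R - R * conjD U (fun i => 1 + lam i) * R
        = R * (conjD U sfun⁻¹ - conjD U (fun i => 1 + lam i)) * R from by
        rw [Matrix.mul_sub, Matrix.sub_mul],
      conjD_sub,
      show (sfun⁻¹ - fun i => 1 + lam i) = fun i => (sfun i)⁻¹ - (1 + lam i) from
        funext fun i => by simp]
  have hEpsd : E.PosSemidef := by
    rw [hE]
    have hin : (conjD U (fun i => (sfun i)⁻¹ - (1 + lam i))).PosSemidef :=
      (posSemidef_conjD_iff hU1 hU2 _).2 fun i => by linarith [(hsf i).2.1]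
    have h := hin.mul_mul_conjTranspose_same R
    rwa [show Rᴴ = R from by rw [← Matrix.star_eq_conjTranspose]; exact hRst] at h
  have hE2psd : ((2 * β ^ k) • L - E).PosSemidef := by
    have hLc : L = R * conjD U lam * R := by rw [← hYc, hRYR]
    have e : (2 * β ^ k) • L - E
        = R * conjD U (fun i => 2 * β ^ k * lam i - ((sfun i)⁻¹ - (1 + lam i))) * R := by
      rw [hE, hLc,
        show (2 * β ^ k) • (R * conjD U lam * R) = R * ((2 * β ^ k) • conjD U lam) * R from by
          rw [mul_smul_comm, smul_mul_assoc],
        conjD_smul,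
        show R * conjD U ((2 * β ^ k) • lam) * R
              - R * conjD U (fun i => (sfun i)⁻¹ - (1 + lam i)) * R
            = R * (conjD U ((2 * β ^ k) • lam)
              - conjD U (fun i => (sfun i)⁻¹ - (1 + lam i))) * R from by
          rw [Matrix.mul_sub, Matrix.sub_mul],
        conjD_sub,
        show ((2 * β ^ k) • lam - fun i => (sfun i)⁻¹ - (1 + lam i))
            = fun i => 2 * β ^ k * lam i - ((sfun i)⁻¹ - (1 + lam i)) from
          funext fun i => by simp [smul_eq_mul]]
    rw [e]
    have hin : (conjD U (fun i => 2 * β ^ k * lam i - ((sfun i)⁻¹ - (1 + lam i)))).PosSemidef :=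
      (posSemidef_conjD_iff hU1 hU2 _).2 fun i => by linarith [(hsf i).2.2]
    have h := hin.mul_mul_conjTranspose_same R
    rwa [show Rᴴ = R from by rw [← Matrix.star_eq_conjTranspose]; exact hRst] at h
  -- block bookkeeping
  set M : Matrix (F ⊕ C) (F ⊕ C) ℝ := Matrix.fromBlocks (X + L) MFC MCF MCC with hM_def
  set Mh : Matrix (F ⊕ C) (F ⊕ C) ℝ := Matrix.fromBlocks Z⁻¹ MFC MCF MCC with hMh_def
  have hdiff1 : Mh - M = Matrix.fromBlocks E 0 0 0 := by
    ext i j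
    cases i <;> cases j <;>
      simp [hM_def, hMh_def, hE_def, Matrix.fromBlocks, Matrix.sub_apply]
  -- the matrix N = fromBlocks X MFC MCF MCC is diagonally dominant
  set N : Matrix (F ⊕ C) (F ⊕ C) ℝ := Matrix.fromBlocks X MFC MCF MCC with hN_def
  have hMe : ∀ i j, M i j = M j i := fun i j => congrFun (congrFun hMsym j) i
  have herase : ∀ (g : F ⊕ C → ℝ) (i0 : F ⊕ C), ∑ j ∈ Finset.univ.erase i0, g j
      = ((∑ f, g (Sum.inl f)) + ∑ c, g (Sum.inr c)) - g i0 := by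
    intro g i0
    rw [Finset.sum_erase_eq_sub (Finset.mem_univ i0), Fintype.sum_sum_type]
  have hNh : N.IsHermitian := by
    show Nᴴ = N
    ext i j
    rw [Matrix.conjTranspose_apply, star_trivial]
    rcases i with i | i <;> rcases j with j | j
    · show X j i = X i j
      by_cases hij : i = j
      · rw [hij]
      · rw [hXdiag i j hij, hXdiag j i fun h => hij h.symm]
    · show MCF j i = MFC i j
      exact (hMe (Sum.inl i) (Sum.inr j)).symm
    · show MFC j i = MCF i j
      exact (hMe (Sum.inr i) (Sum.inl j)).symm
    · show MCC j i = MCC i j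
      exact (hMe (Sum.inr i) (Sum.inr j)).symm
  have hNdd : ∀ i, ∑ j ∈ Finset.univ.erase i, |N i j| ≤ N i i := by
    intro i0
    rw [herase, hN_def]
    rcases i0 with f | c
    · simp only [Matrix.fromBlocks_apply₁₁, Matrix.fromBlocks_apply₁₂]
      have hMrow := hMdd (Sum.inl f)
      rw [herase, hM_def] at hMrow
      simp only [Matrix.fromBlocks_apply₁₁, Matrix.fromBlocks_apply₁₂] at hMrow
      have hXrow : ∑ f', |X f f'| = |X f f| := by
        rw [← Finset.add_sum_erase _ (fun f' => |X f f'|) (Finset.mem_univ f)]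
        have hz : ∀ f' ∈ Finset.univ.erase f, |X f f'| = 0 := fun f' hf' => by
          rw [hXdiag f f' fun h => (Finset.ne_of_mem_erase hf') h.symm, abs_zero]
        rw [Finset.sum_congr rfl hz]
        simp
      have hLff : 0 ≤ L f f := by
        rw [← hLdiag f]
        exact Finset.sum_nonneg fun j _ => abs_nonneg _
      have hLrow2 : ∑ f', |(X + L) f f'| = |(X + L) f f| + L f f := by
        rw [← Finset.add_sum_erase _ (fun f' => |(X + L) f f'|) (Finset.mem_univ f)]
        congr 1
        rw [← hLdiag f]
        refine Finset.sum_congr rfl fun f' hf' => ?_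
        have hne : f' ≠ f := Finset.ne_of_mem_erase hf'
        rw [Matrix.add_apply, hXdiag f f' fun h => hne h.symm, zero_add]
      have hXLff : (X + L) f f = X f f + L f f := Matrix.add_apply _ _ _ _
      have hXLffabs : |(X + L) f f| = X f f + L f f := by
        rw [hXLff]
        exact abs_of_nonneg (by linarith [hXnn f])
      rw [hLrow2, hXLffabs, hXLff] at hMrow
      rw [hXrow, abs_of_nonneg (hXnn f)]
      linarith
    · simp only [Matrix.fromBlocks_apply₂₁, Matrix.fromBlocks_apply₂₂]
      have hMrow := hMdd (Sum.inr c)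
      rw [herase, hM_def] at hMrow
      simp only [Matrix.fromBlocks_apply₂₁, Matrix.fromBlocks_apply₂₂] at hMrow
      exact hMrow
  have hNpsd : N.PosSemidef := posSemidef_of_dd N hNh hNdd
  -- final assembly
  constructor
  · show (Mh - M).PosSemidef
    rw [hdiff1]
    exact posSemidef_fromBlocks_left hEpsd
  · show ((1 + 2 * β ^ k) • M - Mh).PosSemidef
    have hdecomp : (1 + 2 * β ^ k) • M - Mh
        = (2 * β ^ k) • N + Matrix.fromBlocks ((2 * β ^ k) • L - E) 0 0 0 := by
      ext i j
      cases i <;> cases j <;>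
        simp [hM_def, hMh_def, hN_def, hE_def, Matrix.fromBlocks, Matrix.sub_apply,
          Matrix.add_apply, Matrix.smul_apply, smul_eq_mul] <;> ring
    rw [hdecomp]
    have h1 : ((2 * β ^ k) • N).PosSemidef :=
      posSemidef_smul_of_nonneg hNpsd (by positivity)
    exact h1.add (posSemidef_fromBlocks_left hE2psd)

end
end

section
/- Let n ≥ 1, k ≥ 2, w_1,…,w_n > 0 and δ > 0. Let G be the weighted star graph on vertex set {v_1,…,v_n, u} with an edge of weight w_i between u and v_i for each i. Let σ : {1,…,n} → {1,…,k} be any assignment, let W = δ^{−1}·Σ_i w_i, and let Ĝ be the weighted graph on vertex set {v_1,…,v_n, u_1,…,u_k} consisting of the complete graph on {u_1,…,u_k} in which every edge has weight W, together with, for each i, an edge of weight w_i between v_i and u_{σ(i)}. Let U = {u_2,…,u_k}. Then Schur(L_{Ĝ}, U) ⪯ L_G (identifying u_1 with u), and for every i the off-diagonal entry of Schur(L_{Ĝ},U) in position (u_1, v_i) is at most −w_i·(1 − 2δ); that is, in the Schur complement graph the edge between u_1 and v_i has weight at least w_i·(1 − 2δ). -/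
open Matrix BigOperators Finset
open scoped Classical

noncomputable section

/-- The Schur complement `Schur(M, F)` eliminating the first (`F`) block:
`M_CC - M_CF · M_FF⁻¹ · M_FC`. -/
def schurElimF {F C : Type*} [Fintype F] [Fintype C] [DecidableEq F]
    (M : Matrix (F ⊕ C) (F ⊕ C) ℝ) : Matrix C C ℝ :=
  M.toBlocks₂₂ - M.toBlocks₂₁ * M.toBlocks₁₁⁻¹ * M.toBlocks₁₂

/-- The Schur complement `Schur(M, S)` eliminating the second (`S`) block:
`M_CC - M_CS · M_SS⁻¹ · M_SC`. -/
def schurElimS {C S : Type*} [Fintype C] [Fintype S] [DecidableEq S]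
    (M : Matrix (C ⊕ S) (C ⊕ S) ℝ) : Matrix C C ℝ :=
  M.toBlocks₁₁ - M.toBlocks₁₂ * M.toBlocks₂₂⁻¹ * M.toBlocks₂₁

/-- The vector `e_u - e_v`. -/
def eVec {ι : Type*} [DecidableEq ι] (u v : ι) : ι → ℝ :=
  fun a => (if a = u then 1 else 0) - (if a = v then 1 else 0)

/-- The Laplacian of a single unit-weight edge `{u,v}`:
`(e_u - e_v)(e_u - e_v)ᵀ`. -/
def edgeL {ι : Type*} [DecidableEq ι] (u v : ι) : Matrix ι ι ℝ :=
  Matrix.vecMulVec (eVec u v) (eVec u v)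

/-! ### Auxiliary lemmas -/

lemma edgeL_apply' {ι : Type*} [DecidableEq ι] (u v : ι) (a b : ι) :
    edgeL u v a b = eVec u v a * eVec u v b := rfl

lemma eVec_dot' {ι : Type*} [Fintype ι] [DecidableEq ι] (u v : ι) (x : ι → ℝ) :
    eVec u v ⬝ᵥ x = x u - x v := by
  simp [eVec, dotProduct, sub_mul, Finset.sum_sub_distrib, Finset.sum_ite_eq']

lemma dot_eVec' {ι : Type*} [Fintype ι] [DecidableEq ι] (u v : ι) (x : ι → ℝ) :
    x ⬝ᵥ eVec u v = x u - x v := by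
  rw [dotProduct_comm]; exact eVec_dot' u v x

lemma quad_edgeL' {ι : Type*} [Fintype ι] [DecidableEq ι] (u v : ι) (x : ι → ℝ) :
    x ⬝ᵥ edgeL u v *ᵥ x = (x u - x v) ^ 2 := by
  have h : edgeL u v *ᵥ x = fun a => eVec u v a * (x u - x v) := by
    ext a
    show (fun j => eVec u v a * eVec u v j) ⬝ᵥ x = _
    rw [show (fun j => eVec u v a * eVec u v j) ⬝ᵥ x = eVec u v a * (eVec u v ⬝ᵥ x) by
      simp [dotProduct, Finset.mul_sum, mul_assoc], eVec_dot']
  rw [h]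
  have h2 : x ⬝ᵥ (fun a => eVec u v a * (x u - x v)) = (x ⬝ᵥ eVec u v) * (x u - x v) := by
    simp [dotProduct, Finset.sum_mul, mul_assoc]
  rw [h2, dot_eVec']; ring

lemma quad_sum' {ι α : Type*} [Fintype ι] (s : Finset α) (f : α → Matrix ι ι ℝ) (x : ι → ℝ) :
    x ⬝ᵥ (∑ i ∈ s, f i) *ᵥ x = ∑ i ∈ s, x ⬝ᵥ (f i) *ᵥ x := by
  classical
  induction s using Finset.induction with
  | empty => simp [mulVec, dotProduct]
  | insert _ _ h ih =>
      rw [Finset.sum_insert h, Finset.sum_insert h, Matrix.add_mulVec, dotProduct_add, ih]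

lemma sum_pair' {α : Type*} [Fintype α] (f g : α → ℝ) :
    ∑ a, ∑ b, (f a - f b) * (g a - g b) =
      2 * (Fintype.card α : ℝ) * (∑ a, f a * g a) - 2 * (∑ a, f a) * (∑ a, g a) := by
  simp only [sub_mul, mul_sub, Finset.sum_sub_distrib, Finset.sum_const, Finset.card_univ,
    nsmul_eq_mul, ← Finset.sum_mul, ← Finset.mul_sum]
  ring

lemma dot_symm' {ι : Type*} [Fintype ι] (D : Matrix ι ι ℝ) (h : ∀ j l, D j l = D l j)
    (a b : ι → ℝ) : a ⬝ᵥ D *ᵥ b = b ⬝ᵥ D *ᵥ a := by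
  simp only [dotProduct, mulVec, Finset.mul_sum]
  rw [Finset.sum_comm]
  exact Finset.sum_congr rfl fun j _ => Finset.sum_congr rfl fun l _ => by
    rw [h l j]; ring

lemma dot_pair' {C S : Type*} [Fintype C] [Fintype S] (B : Matrix C S ℝ) (Bt : Matrix S C ℝ)
    (h : ∀ p j, Bt j p = B p j) (x : C → ℝ) (y : S → ℝ) :
    x ⬝ᵥ B *ᵥ y = (Bt *ᵥ x) ⬝ᵥ y := by
  simp only [dotProduct, mulVec, Finset.mul_sum, Finset.sum_mul, h]
  rw [Finset.sum_comm]
  exact Finset.sum_congr rfl fun j _ => Finset.sum_congr rfl fun l _ => by ring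

lemma aux_one (a cc ww : ℝ) (ha : a ≠ 0) (hc : cc ≠ 0) (hw : ww ≠ 0) :
    a * a⁻¹ + a * (ww / cc) * (a⁻¹ * a⁻¹) - ww * a⁻¹ - ww * (ww / cc) * a⁻¹ * ((1 - cc) / ww)
      = 1 := by
  field_simp
  ring

lemma aux_zero (a b cc ww : ℝ) (ha : a ≠ 0) (hb : b ≠ 0) (hc : cc ≠ 0) (hw : ww ≠ 0) :
    0 + a * (ww / cc) * (a⁻¹ * b⁻¹) - ww * b⁻¹ - ww * (ww / cc) * b⁻¹ * ((1 - cc) / ww)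
      = 0 := by
  field_simp
  ring

lemma aux_col (a cc ww : ℝ) (ha : a ≠ 0) (hc : cc ≠ 0) (hw : ww ≠ 0) :
    a⁻¹ + ww / cc * ((1 - cc) / ww * a⁻¹) = a⁻¹ / cc := by
  field_simp
  ring

lemma aux_div (a cc ww : ℝ) (ha : a ≠ 0) (hc : cc ≠ 0) :
    ww * (a⁻¹ / cc) = ww / (cc * a) := by
  field_simp

lemma aux_WW (ww t : ℝ) (hw : ww ≠ 0) (ht : t ≠ 0) : ww / (t * ww) = 1 / t := by
  field_simp

set_option maxHeartbeats 2000000 in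
/-- vertex splitting: `G` is the weighted star on `{v_1,…,v_n, u}`
(vertex set `Fin n ⊕ Unit`, with `u = Sum.inr ()`).  `Ĝ` lives on
`(Fin n ⊕ Unit) ⊕ Fin k`: the `u`-vertices are `u_1 = Sum.inl (Sum.inr ())`
together with the `k ≥ 1` extra vertices `Sum.inr j` (so there are `k + 1 ≥ 2`
copies of `u` in total).  The copies of `u` are joined by a complete graph with
edge weight `W = δ⁻¹·Σ_i w_i`, and each `v_i` is attached to the copy `σ i` by
an edge of weight `w_i`.  Eliminating the extra copies `U = Fin k`,
`Schur(L_Ĝ, U) ⪯ L_G`, and each off-diagonal entry `(u_1, v_i)` of the Schur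
complement is at most `−w_i·(1−2δ)`. -/
theorem split_star_schur (n k : ℕ) (hn : 1 ≤ n) (hk : 1 ≤ k)
    (w : Fin n → ℝ) (hw : ∀ i, 0 < w i) (δ : ℝ) (hδ : 0 < δ)
    (σ : Fin n → Unit ⊕ Fin k) :
    -- the map sending each copy of `u` to its vertex in `Ĝ`
    let uOf : Unit ⊕ Fin k → (Fin n ⊕ Unit) ⊕ Fin k :=
      Sum.elim (fun _ => Sum.inl (Sum.inr ())) Sum.inr
    let W : ℝ := δ⁻¹ * ∑ i, w i
    let LG : Matrix (Fin n ⊕ Unit) (Fin n ⊕ Unit) ℝ :=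
      ∑ i, w i • edgeL (Sum.inl i) (Sum.inr ())
    let LGhat : Matrix ((Fin n ⊕ Unit) ⊕ Fin k) ((Fin n ⊕ Unit) ⊕ Fin k) ℝ :=
      (W / 2) • (∑ a : Unit ⊕ Fin k, ∑ b : Unit ⊕ Fin k, edgeL (uOf a) (uOf b)) +
        ∑ i, w i • edgeL (Sum.inl (Sum.inl i)) (uOf (σ i))
    PSDLE (schurElimS LGhat) LG ∧
      ∀ i : Fin n, schurElimS LGhat (Sum.inr ()) (Sum.inl i) ≤ -(w i * (1 - 2 * δ)) := by
  intro uOf W LG LGhat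
  have hwsum : 0 < ∑ i, w i := by
    have : (Finset.univ : Finset (Fin n)).Nonempty := by
      refine Finset.univ_nonempty_iff.mpr ?_
      exact Fin.pos_iff_nonempty.mp hn
    exact Finset.sum_pos (fun i _ => hw i) this
  have hW : (0:ℝ) < W := mul_pos (inv_pos.mpr hδ) hwsum
  have hWne : W ≠ 0 := ne_of_gt hW
  have hLGhat_eq : LGhat =
      (W / 2) • (∑ a : Unit ⊕ Fin k, ∑ b : Unit ⊕ Fin k, edgeL (uOf a) (uOf b)) +
        ∑ i, w i • edgeL (Sum.inl (Sum.inl i)) (uOf (σ i)) := rfl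
  have hLG_eq : LG = ∑ i, w i • edgeL (Sum.inl i) (Sum.inr ()) := rfl
  have hLG_entry : ∀ p q, LG p q =
      ∑ i, w i * (eVec (Sum.inl i) (Sum.inr ()) p * eVec (Sum.inl i) (Sum.inr ()) q) := by
    intro p q
    simp [LG, Matrix.sum_apply, Matrix.smul_apply, edgeL_apply', smul_eq_mul]
  set s : Fin k → ℝ := fun j => ∑ i, if σ i = Sum.inr j then w i else 0 with hs_def
  have hs0 : ∀ j, 0 ≤ s j := by
    intro j
    refine Finset.sum_nonneg fun i _ => ?_
    split_ifs
    exacts [(hw i).le, le_refl 0]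
  have hsle : ∀ j, s j ≤ δ * W := by
    intro j
    have h1 : s j ≤ ∑ i, w i := by
      refine Finset.sum_le_sum fun i _ => ?_
      split_ifs
      exacts [le_refl _, (hw i).le]
    have h2 : δ * W = ∑ i, w i := by
      show δ * (δ⁻¹ * ∑ i, w i) = ∑ i, w i
      field_simp
    linarith
  set d : Fin k → ℝ := fun j => ((k:ℝ) + 1) * W + s j with hd_def
  have hk1 : (0:ℝ) < (k:ℝ) + 1 := by positivity
  have hdpos : ∀ j, 0 < d j := by
    intro j
    have h1 := hs0 j
    have h2 : 0 < ((k:ℝ)+1) * W := by positivity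
    show 0 < ((k:ℝ) + 1) * W + s j
    linarith
  have hdne : ∀ j, d j ≠ 0 := fun j => ne_of_gt (hdpos j)
  have hdge : ∀ j, ((k:ℝ)+1) * W ≤ d j := by
    intro j
    have := hs0 j
    show _ ≤ ((k:ℝ) + 1) * W + s j
    linarith
  have hdle : ∀ j, d j ≤ ((k:ℝ) + 1 + δ) * W := by
    intro j
    have := hsle j
    show ((k:ℝ) + 1) * W + s j ≤ _
    nlinarith
  set c : ℝ := 1 - W * ∑ j, (d j)⁻¹ with hc_def
  have hWS_le : W * ∑ j, (d j)⁻¹ ≤ (k:ℝ) / ((k:ℝ)+1) := by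
    have hterm : ∀ j : Fin k, W * (d j)⁻¹ ≤ ((k:ℝ)+1)⁻¹ := by
      intro j
      have h1 : (d j)⁻¹ ≤ (((k:ℝ)+1) * W)⁻¹ :=
        inv_anti₀ (by positivity) (hdge j)
      have h2 : W * (((k:ℝ)+1) * W)⁻¹ = ((k:ℝ)+1)⁻¹ := by
        field_simp
      calc W * (d j)⁻¹ ≤ W * (((k:ℝ)+1) * W)⁻¹ := by
            exact mul_le_mul_of_nonneg_left h1 hW.le
        _ = ((k:ℝ)+1)⁻¹ := h2
    calc W * ∑ j, (d j)⁻¹ = ∑ j : Fin k, W * (d j)⁻¹ := by rw [Finset.mul_sum]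
      _ ≤ ∑ j : Fin k, ((k:ℝ)+1)⁻¹ := Finset.sum_le_sum fun j _ => hterm j
      _ = (k:ℝ) * ((k:ℝ)+1)⁻¹ := by
            rw [Finset.sum_const, Finset.card_univ, Fintype.card_fin, nsmul_eq_mul]
      _ = (k:ℝ) / ((k:ℝ)+1) := by rw [div_eq_mul_inv]
  have hWS_ge : (k:ℝ) / ((k:ℝ)+1+δ) ≤ W * ∑ j, (d j)⁻¹ := by
    have hkd : (0:ℝ) < (k:ℝ) + 1 + δ := by positivity
    have hterm : ∀ j : Fin k, ((k:ℝ)+1+δ)⁻¹ ≤ W * (d j)⁻¹ := by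
      intro j
      have h1 : ((((k:ℝ)+1+δ)) * W)⁻¹ ≤ (d j)⁻¹ :=
        inv_anti₀ (hdpos j) (hdle j)
      have h2 : W * ((((k:ℝ)+1+δ)) * W)⁻¹ = ((k:ℝ)+1+δ)⁻¹ := by
        field_simp
      calc ((k:ℝ)+1+δ)⁻¹ = W * ((((k:ℝ)+1+δ)) * W)⁻¹ := h2.symm
        _ ≤ W * (d j)⁻¹ := mul_le_mul_of_nonneg_left h1 hW.le
    calc (k:ℝ) / ((k:ℝ)+1+δ) = ∑ j : Fin k, ((k:ℝ)+1+δ)⁻¹ := by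
          rw [Finset.sum_const, Finset.card_univ, Fintype.card_fin, nsmul_eq_mul,
            div_eq_mul_inv]
      _ ≤ ∑ j : Fin k, W * (d j)⁻¹ := Finset.sum_le_sum fun j _ => hterm j
      _ = W * ∑ j, (d j)⁻¹ := by rw [Finset.mul_sum]
  have hcpos : 0 < c := by
    have h1 : (k:ℝ) / ((k:ℝ)+1) < 1 := by
      rw [div_lt_one hk1]; linarith
    rw [hc_def]; linarith
  have hcne : c ≠ 0 := ne_of_gt hcpos
  have hsumd : ∑ j, (d j)⁻¹ = (1 - c) / W := by
    rw [hc_def]; field_simp; ring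
  have hcd : ∀ j, c * d j ≤ (1+δ) * W := by
    intro j
    have hkd : (0:ℝ) < (k:ℝ) + 1 + δ := by positivity
    have hcle : c ≤ (1+δ) / ((k:ℝ)+1+δ) := by
      have h1 : (1:ℝ) - (k:ℝ)/((k:ℝ)+1+δ) = (1+δ)/((k:ℝ)+1+δ) := by
        field_simp; ring
      rw [hc_def]; linarith
    have h2 : c * d j ≤ ((1+δ)/((k:ℝ)+1+δ)) * (((k:ℝ)+1+δ) * W) := by
      refine mul_le_mul hcle (hdle j) (hdpos j).le ?_
      positivity
    have h3 : ((1+δ)/((k:ℝ)+1+δ)) * (((k:ℝ)+1+δ) * W) = (1+δ) * W := by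
      field_simp
    exact h2.trans (le_of_eq h3)
  -- the explicit inverse of the bottom-right block
  set N : Matrix (Fin k) (Fin k) ℝ :=
    Matrix.of (fun j l => (if j = l then (d j)⁻¹ else 0) + W / c * ((d j)⁻¹ * (d l)⁻¹))
    with hN_def
  have hNsym : ∀ j l, N j l = N l j := by
    intro j l
    by_cases h : j = l
    · subst h; rfl
    · simp only [hN_def, Matrix.of_apply, if_neg h, if_neg (Ne.symm h)]
      ring
  clear_value W LG LGhat s d c N
  -- entrywise description of LGhat
  have hentry : ∀ p q, LGhat p q =
      (W / 2) * (∑ a : Unit ⊕ Fin k, ∑ b : Unit ⊕ Fin k,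
        eVec (uOf a) (uOf b) p * eVec (uOf a) (uOf b) q) +
      ∑ i, w i * (eVec (Sum.inl (Sum.inl i)) (uOf (σ i)) p *
        eVec (Sum.inl (Sum.inl i)) (uOf (σ i)) q) := by
    intro p q
    rw [hLGhat_eq]
    simp [Matrix.add_apply, Matrix.smul_apply, Matrix.sum_apply, edgeL_apply',
      smul_eq_mul, Finset.mul_sum, mul_add]
  have huOf_inr : ∀ (t : Unit ⊕ Fin k) (j : Fin k),
      ((Sum.inr j : (Fin n ⊕ Unit) ⊕ Fin k) = uOf t) ↔ t = Sum.inr j := by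
    rintro (⟨⟩|m) j <;> simp [uOf] <;> exact eq_comm
  have huOf_u1 : ∀ (t : Unit ⊕ Fin k),
      ((Sum.inl (Sum.inr ()) : (Fin n ⊕ Unit) ⊕ Fin k) = uOf t) ↔ t = Sum.inl () := by
    rintro (⟨⟩|m) <;> simp [uOf]
  have huOf_vi : ∀ (t : Unit ⊕ Fin k) (i : Fin n),
      ¬ ((Sum.inl (Sum.inl i) : (Fin n ⊕ Unit) ⊕ Fin k) = uOf t) := by
    rintro (⟨⟩|m) i <;> simp [uOf]
  have heVr : ∀ (a b : Unit ⊕ Fin k) (j : Fin k),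
      eVec (uOf a) (uOf b) ((Sum.inr j : (Fin n ⊕ Unit) ⊕ Fin k)) =
        (if a = Sum.inr j then (1:ℝ) else 0) - (if b = Sum.inr j then 1 else 0) := by
    intro a b j
    simp only [eVec, huOf_inr]
  have heVu1 : ∀ (a b : Unit ⊕ Fin k),
      eVec (uOf a) (uOf b) (Sum.inl (Sum.inr ())) =
        (if a = Sum.inl () then (1:ℝ) else 0) - (if b = Sum.inl () then 1 else 0) := by
    intro a b
    simp only [eVec, huOf_u1]
  have heVvi : ∀ (a b : Unit ⊕ Fin k) (i : Fin n),
      eVec (uOf a) (uOf b) (Sum.inl (Sum.inl i)) = 0 := by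
    intro a b i
    simp [eVec, huOf_vi a i, huOf_vi b i]
  have heE_r : ∀ (i : Fin n) (j : Fin k),
      eVec (Sum.inl (Sum.inl i)) (uOf (σ i)) (Sum.inr j) =
        -(if σ i = Sum.inr j then (1:ℝ) else 0) := by
    intro i j
    simp [eVec, huOf_inr]
  have heE_u1 : ∀ (i : Fin n),
      eVec (Sum.inl (Sum.inl i)) (uOf (σ i)) (Sum.inl (Sum.inr ())) =
        -(if σ i = Sum.inl () then (1:ℝ) else 0) := by
    intro i
    simp [eVec, huOf_u1]
  have heE_vi : ∀ (i i' : Fin n),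
      eVec (Sum.inl (Sum.inl i)) (uOf (σ i)) (Sum.inl (Sum.inl i')) =
        (if i' = i then (1:ℝ) else 0) := by
    intro i i'
    simp [eVec, huOf_vi (σ i) i']
  -- block entries
  have hD : ∀ j l, LGhat.toBlocks₂₂ j l = (if j = l then d j else 0) - W := by
    intro j l
    rw [Matrix.toBlocks₂₂]
    simp only [Matrix.of_apply]
    rw [hentry]
    have e2 : ∀ m : Fin k, ∑ a : Unit ⊕ Fin k,
        (if a = Sum.inr m then (1:ℝ) else 0) = 1 := by
      intro m; simp [Finset.sum_ite_eq']
    have h1 : (∑ a : Unit ⊕ Fin k, ∑ b : Unit ⊕ Fin k,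
        eVec (uOf a) (uOf b) (Sum.inr j) * eVec (uOf a) (uOf b) (Sum.inr l)) =
        2 * ((k:ℝ)+1) * (if j = l then 1 else 0) - 2 := by
      simp only [heVr]
      rw [sum_pair']
      have e1 : ∑ a : Unit ⊕ Fin k, (if a = Sum.inr j then (1:ℝ) else 0) *
          (if a = Sum.inr l then 1 else 0) = (if j = l then 1 else 0) := by
        simp only [ite_mul, one_mul, zero_mul]
        rw [Finset.sum_ite_eq']
        simp
      rw [e1, e2, e2]
      have hcard : (Fintype.card (Unit ⊕ Fin k) : ℝ) = (k:ℝ) + 1 := by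
        simp [add_comm]
      rw [hcard]; ring
    have h2 : (∑ i, w i * (eVec (Sum.inl (Sum.inl i)) (uOf (σ i)) (Sum.inr j) *
        eVec (Sum.inl (Sum.inl i)) (uOf (σ i)) (Sum.inr l))) = if j = l then s j else 0 := by
      rcases eq_or_ne j l with h | h
      · subst h
        rw [if_pos rfl, hs_def]
        refine Finset.sum_congr rfl fun i _ => ?_
        rw [heE_r]
        split_ifs <;> ring
      · rw [if_neg h]
        refine Finset.sum_eq_zero fun i _ => ?_
        rw [heE_r, heE_r]
        split_ifs with ha hb
        · exfalso; rw [ha] at hb; exact h (Sum.inr.inj hb)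
        · ring
        · ring
        · ring
    rw [h1, h2]
    rcases eq_or_ne j l with h | h
    · subst h
      simp only [eq_self_iff_true, if_true, hd_def]
      ring
    · simp only [if_neg h]
      ring
  have hBu : ∀ j : Fin k, LGhat.toBlocks₁₂ (Sum.inr ()) j = -W := by
    intro j
    rw [Matrix.toBlocks₁₂]
    simp only [Matrix.of_apply]
    rw [hentry]
    have h1 : (∑ a : Unit ⊕ Fin k, ∑ b : Unit ⊕ Fin k,
        eVec (uOf a) (uOf b) (Sum.inl (Sum.inr ())) * eVec (uOf a) (uOf b) (Sum.inr j)) =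
        -2 := by
      have : ∀ a b : Unit ⊕ Fin k,
          eVec (uOf a) (uOf b) (Sum.inl (Sum.inr ())) * eVec (uOf a) (uOf b) (Sum.inr j)
          = ((if a = Sum.inl () then (1:ℝ) else 0) - (if b = Sum.inl () then 1 else 0)) *
            ((if a = Sum.inr j then (1:ℝ) else 0) - (if b = Sum.inr j then 1 else 0)) := by
        intro a b; rw [heVu1, heVr]
      simp only [this]
      rw [sum_pair']
      have e0 : ∑ a : Unit ⊕ Fin k, (if a = Sum.inl () then (1:ℝ) else 0) *
          (if a = Sum.inr j then 1 else 0) = 0 := by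
        simp only [ite_mul, one_mul, zero_mul]
        rw [Finset.sum_ite_eq']
        simp
      have e2 : ∑ a : Unit ⊕ Fin k, (if a = Sum.inr j then (1:ℝ) else 0) = 1 := by
        simp [Finset.sum_ite_eq']
      have e3 : ∑ a : Unit ⊕ Fin k, (if a = Sum.inl () then (1:ℝ) else 0) = 1 := by
        simp [Finset.sum_ite_eq']
      rw [e0, e2, e3]
      ring
    have h2 : (∑ i, w i * (eVec (Sum.inl (Sum.inl i)) (uOf (σ i)) (Sum.inl (Sum.inr ())) *
        eVec (Sum.inl (Sum.inl i)) (uOf (σ i)) (Sum.inr j))) = 0 := by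
      refine Finset.sum_eq_zero fun i _ => ?_
      rw [heE_u1, heE_r]
      split_ifs with ha hb
      · exfalso; rw [ha] at hb; exact Sum.inl_ne_inr hb
      · ring
      · ring
      · ring
    rw [h1, h2]
    ring
  have hBv : ∀ (i : Fin n) (j : Fin k),
      LGhat.toBlocks₁₂ (Sum.inl i) j = -(if σ i = Sum.inr j then w i else 0) := by
    intro i j
    rw [Matrix.toBlocks₁₂]
    simp only [Matrix.of_apply]
    rw [hentry]
    have h1 : (∑ a : Unit ⊕ Fin k, ∑ b : Unit ⊕ Fin k,
        eVec (uOf a) (uOf b) (Sum.inl (Sum.inl i)) * eVec (uOf a) (uOf b) (Sum.inr j)) = 0 := by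
      refine Finset.sum_eq_zero fun a _ => Finset.sum_eq_zero fun b _ => ?_
      rw [heVvi]; ring
    have h2 : (∑ t, w t * (eVec (Sum.inl (Sum.inl t)) (uOf (σ t)) (Sum.inl (Sum.inl i)) *
        eVec (Sum.inl (Sum.inl t)) (uOf (σ t)) (Sum.inr j))) =
        -(if σ i = Sum.inr j then w i else 0) := by
      rw [Finset.sum_eq_single_of_mem i (Finset.mem_univ i)]
      · rw [heE_vi, heE_r, if_pos rfl]
        split_ifs <;> ring
      · intro t _ ht
        rw [heE_vi, heE_r, if_neg (Ne.symm ht)]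
        ring
    rw [h1, h2]
    ring
  have hBt : ∀ (p : Fin n ⊕ Unit) (j : Fin k),
      LGhat.toBlocks₂₁ j p = LGhat.toBlocks₁₂ p j := by
    intro p j
    rw [Matrix.toBlocks₂₁, Matrix.toBlocks₁₂]
    simp only [Matrix.of_apply]
    rw [hentry, hentry]
    congr 1
    · congr 1
      exact Finset.sum_congr rfl fun a _ => Finset.sum_congr rfl fun b _ => by ring
    · exact Finset.sum_congr rfl fun t _ => by ring
  have hAu : ∀ i : Fin n, LGhat.toBlocks₁₁ (Sum.inr ()) (Sum.inl i) =
      -(if σ i = Sum.inl () then w i else 0) := by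
    intro i
    rw [Matrix.toBlocks₁₁]
    simp only [Matrix.of_apply]
    rw [hentry]
    have h1 : (∑ a : Unit ⊕ Fin k, ∑ b : Unit ⊕ Fin k,
        eVec (uOf a) (uOf b) (Sum.inl (Sum.inr ())) * eVec (uOf a) (uOf b) (Sum.inl (Sum.inl i)))
        = 0 := by
      refine Finset.sum_eq_zero fun a _ => Finset.sum_eq_zero fun b _ => ?_
      rw [heVvi]; ring
    have h2 : (∑ t, w t * (eVec (Sum.inl (Sum.inl t)) (uOf (σ t)) (Sum.inl (Sum.inr ())) *
        eVec (Sum.inl (Sum.inl t)) (uOf (σ t)) (Sum.inl (Sum.inl i)))) =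
        -(if σ i = Sum.inl () then w i else 0) := by
      rw [Finset.sum_eq_single_of_mem i (Finset.mem_univ i)]
      · rw [heE_vi, heE_u1, if_pos rfl]
        split_ifs <;> ring
      · intro t _ ht
        rw [heE_vi, heE_u1, if_neg (Ne.symm ht)]
        ring
    rw [h1, h2]
    ring
  -- D * N = 1
  have hDN : LGhat.toBlocks₂₂ * N = 1 := by
    ext j m
    rw [Matrix.mul_apply]
    have expand : ∀ l, LGhat.toBlocks₂₂ j l * N l m
        = ((if j = l then ((if l = m then d j * (d l)⁻¹ else 0)
              + d j * (W/c) * ((d l)⁻¹ * (d m)⁻¹)) else 0)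
          - (if l = m then W * (d l)⁻¹ else 0)) - W * (W/c) * (d m)⁻¹ * (d l)⁻¹ := by
      intro l
      rw [hD, hN_def]
      simp only [Matrix.of_apply]
      split_ifs <;> ring
    rw [Finset.sum_congr rfl fun l _ => expand l]
    rw [Finset.sum_sub_distrib, Finset.sum_sub_distrib, Finset.sum_ite_eq,
      Finset.sum_ite_eq', ← Finset.mul_sum, hsumd]
    simp only [Finset.mem_univ, if_true]
    rw [Matrix.one_apply]
    rcases eq_or_ne j m with h | h
    · subst h
      rw [if_pos rfl, if_pos rfl]
      exact aux_one (d j) c W (hdne j) hcne hWne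
    · rw [if_neg h, if_neg h]
      exact aux_zero (d j) (d m) c W (hdne j) (hdne m) hcne hWne
  have hDinv : LGhat.toBlocks₂₂⁻¹ = N := Matrix.inv_eq_right_inv hDN
  -- quadratic form of D
  have hDquad : ∀ z : Fin k → ℝ, z ⬝ᵥ LGhat.toBlocks₂₂ *ᵥ z =
      (∑ j, d j * z j ^ 2) - W * (∑ j, z j) ^ 2 := by
    intro z
    have h1 : z ⬝ᵥ LGhat.toBlocks₂₂ *ᵥ z
        = ∑ j, ∑ l, z j * (LGhat.toBlocks₂₂ j l * z l) := by
      simp [dotProduct, mulVec, Finset.mul_sum]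
    rw [h1]
    have h2 : ∀ j l, z j * (LGhat.toBlocks₂₂ j l * z l)
        = (if j = l then d j * z j ^ 2 else 0) - W * (z j * z l) := by
      intro j l
      rw [hD]
      split_ifs with h
      · subst h; ring
      · ring
    rw [Finset.sum_congr rfl fun j _ => Finset.sum_congr rfl fun l _ => h2 j l]
    simp only [Finset.sum_sub_distrib]
    rw [Finset.sum_congr rfl fun j (_ : j ∈ Finset.univ) => Finset.sum_ite_eq Finset.univ j
      (fun _ => d j * z j ^ 2)]
    simp only [Finset.mem_univ, if_true]
    congr 1
    calc ∑ j, ∑ l, W * (z j * z l) = ∑ j, W * (z j * ∑ l, z l) := by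
          refine Finset.sum_congr rfl fun j _ => ?_
          rw [← Finset.mul_sum, ← Finset.mul_sum]
      _ = W * ((∑ j, z j) * (∑ l, z l)) := by
          rw [← Finset.mul_sum, ← Finset.sum_mul]
      _ = W * (∑ j, z j) ^ 2 := by ring
  have hDpsd : ∀ z : Fin k → ℝ, 0 ≤ z ⬝ᵥ LGhat.toBlocks₂₂ *ᵥ z := by
    intro z
    rw [hDquad]
    have h1 : (∑ j, z j)^2 ≤ (k:ℝ) * ∑ j, z j ^ 2 := by
      have := sq_sum_le_card_mul_sum_sq (s := (Finset.univ : Finset (Fin k))) (f := z)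
      simpa using this
    have h2 : ((k:ℝ)+1) * W * (∑ j, z j ^ 2) ≤ ∑ j, d j * z j ^ 2 := by
      rw [Finset.mul_sum]
      refine Finset.sum_le_sum fun j _ => ?_
      have := hdge j
      nlinarith [sq_nonneg (z j)]
    have h3 : 0 ≤ ∑ j, z j ^ 2 := Finset.sum_nonneg fun j _ => sq_nonneg _
    nlinarith [mul_le_mul_of_nonneg_left h1 hW.le]
  -- symmetry facts
  have hschur_symm : ∀ p q, schurElimS LGhat p q = schurElimS LGhat q p := by
    have hM2 : ∀ p q, (LGhat.toBlocks₁₂ * N * LGhat.toBlocks₂₁) p q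
        = ∑ j, ∑ l, LGhat.toBlocks₁₂ p j * (N j l * LGhat.toBlocks₁₂ q l) := by
      intro p q
      rw [Matrix.mul_apply]
      rw [Finset.sum_congr rfl fun l (_ : l ∈ Finset.univ) => by
        rw [Matrix.mul_apply, hBt, Finset.sum_mul]]
      rw [Finset.sum_comm]
      exact Finset.sum_congr rfl fun j _ => Finset.sum_congr rfl fun l _ => by ring
    have hA_symm : ∀ p q, LGhat.toBlocks₁₁ p q = LGhat.toBlocks₁₁ q p := by
      intro p q
      show LGhat (Sum.inl p) (Sum.inl q) = LGhat (Sum.inl q) (Sum.inl p)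
      rw [hentry, hentry]
      congr 1
      · congr 1
        exact Finset.sum_congr rfl fun a _ => Finset.sum_congr rfl fun b _ => by ring
      · exact Finset.sum_congr rfl fun t _ => by ring
    intro p q
    simp only [schurElimS, hDinv, Matrix.sub_apply]
    rw [hA_symm p q, hM2, hM2]
    congr 1
    rw [Finset.sum_comm]
    exact Finset.sum_congr rfl fun j _ => Finset.sum_congr rfl fun l _ => by
      rw [hNsym j l]; ring
  have hLG_symm : ∀ p q, LG p q = LG q p := by
    intro p q
    rw [hLG_entry, hLG_entry]
    exact Finset.sum_congr rfl fun i _ => by ring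
  refine ⟨Matrix.PosSemidef.of_dotProduct_mulVec_nonneg ?_ ?_, ?_⟩
  · -- Hermitian
    ext p q
    simp only [Matrix.conjTranspose_apply, Matrix.sub_apply, star_trivial]
    rw [hLG_symm q p, hschur_symm q p]
  · -- quadratic form
    intro x
    have hstar : star x = x := by
      funext p; simp
    rw [hstar]
    set y : Fin k → ℝ := fun _ => x (Sum.inr ()) with hy_def
    set X : ((Fin n ⊕ Unit) ⊕ Fin k) → ℝ := Sum.elim x y with hX_def
    set v : Fin k → ℝ := LGhat.toBlocks₂₁ *ᵥ x with hv_def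
    set z : Fin k → ℝ := y + N *ᵥ v with hz_def
    clear_value y X v z
    have hDsym : ∀ a b : Fin k → ℝ,
        a ⬝ᵥ LGhat.toBlocks₂₂ *ᵥ b = b ⬝ᵥ LGhat.toBlocks₂₂ *ᵥ a := by
      refine dot_symm' _ fun j l => ?_
      rw [hD, hD]
      rcases eq_or_ne j l with h | h
      · subst h; rfl
      · rw [if_neg h, if_neg (Ne.symm h)]
    have hpair : ∀ (a : (Fin n ⊕ Unit) → ℝ) (b : Fin k → ℝ),
        a ⬝ᵥ LGhat.toBlocks₁₂ *ᵥ b = (LGhat.toBlocks₂₁ *ᵥ a) ⬝ᵥ b :=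
      dot_pair' _ _ hBt
    have hDNv : ∀ u : Fin k → ℝ, LGhat.toBlocks₂₂ *ᵥ (N *ᵥ u) = u := by
      intro u
      rw [Matrix.mulVec_mulVec, hDN, Matrix.one_mulVec]
    -- quadratic form of LGhat at the constant extension
    have hXu : ∀ t : Unit ⊕ Fin k, X (uOf t) = x (Sum.inr ()) := by
      rintro (⟨⟩|m) <;> simp [hX_def, hy_def, uOf]
    have hXL : X ⬝ᵥ LGhat *ᵥ X = x ⬝ᵥ LG *ᵥ x := by
      have hq : ∀ (ι : Type) (_ : Fintype ι) (_ : DecidableEq ι), True := fun _ _ _ => trivial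
      have hL : X ⬝ᵥ LGhat *ᵥ X =
          (W / 2) * (∑ a : Unit ⊕ Fin k, ∑ b : Unit ⊕ Fin k,
            (X (uOf a) - X (uOf b))^2) +
          ∑ i, w i * (X (Sum.inl (Sum.inl i)) - X (uOf (σ i)))^2 := by
        conv_lhs => rw [hLGhat_eq]
        rw [Matrix.add_mulVec, dotProduct_add]
        congr 1
        · rw [Matrix.smul_mulVec, dotProduct_smul, smul_eq_mul]
          congr 1
          rw [quad_sum']
          refine Finset.sum_congr rfl fun a _ => ?_
          rw [quad_sum']
          exact Finset.sum_congr rfl fun b _ => quad_edgeL' _ _ _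
        · rw [quad_sum']
          refine Finset.sum_congr rfl fun i _ => ?_
          rw [Matrix.smul_mulVec, dotProduct_smul, smul_eq_mul, quad_edgeL']
      have hR : x ⬝ᵥ LG *ᵥ x = ∑ i, w i * (x (Sum.inl i) - x (Sum.inr ()))^2 := by
        conv_lhs => rw [hLG_eq]
        rw [quad_sum']
        refine Finset.sum_congr rfl fun i _ => ?_
        rw [Matrix.smul_mulVec, dotProduct_smul, smul_eq_mul, quad_edgeL']
      rw [hL, hR]
      have h0 : (∑ a : Unit ⊕ Fin k, ∑ b : Unit ⊕ Fin k, (X (uOf a) - X (uOf b))^2) = 0 := by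
        refine Finset.sum_eq_zero fun a _ => Finset.sum_eq_zero fun b _ => ?_
        rw [hXu a, hXu b]; ring
      rw [h0]
      have h1 : ∀ i, X (Sum.inl (Sum.inl i)) = x (Sum.inl i) := fun i => by simp [hX_def]
      have h2 : ∀ i : Fin n, X (uOf (σ i)) = x (Sum.inr ()) := fun i => hXu (σ i)
      rw [Finset.sum_congr rfl fun i _ => by rw [h1 i, h2 i]]
      ring
    have e1 : x ⬝ᵥ LGhat.toBlocks₁₂ *ᵥ y = y ⬝ᵥ v := by
      rw [hpair, ← hv_def, dotProduct_comm]
    have e4 : y ⬝ᵥ LGhat.toBlocks₂₁ *ᵥ x = y ⬝ᵥ v := by rw [← hv_def]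
    have e2 : x ⬝ᵥ (LGhat.toBlocks₁₂ * N * LGhat.toBlocks₂₁) *ᵥ x = v ⬝ᵥ (N *ᵥ v) := by
      rw [← Matrix.mulVec_mulVec, ← Matrix.mulVec_mulVec, hpair, ← hv_def]
    have eL : X ⬝ᵥ LGhat *ᵥ X = x ⬝ᵥ LGhat.toBlocks₁₁ *ᵥ x + y ⬝ᵥ v + y ⬝ᵥ v
        + y ⬝ᵥ LGhat.toBlocks₂₂ *ᵥ y := by
      conv_lhs => rw [← Matrix.fromBlocks_toBlocks LGhat]
      rw [hX_def, Matrix.fromBlocks_mulVec, sumElim_dotProduct_sumElim]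
      simp only [Sum.elim_comp_inl, Sum.elim_comp_inr]
      rw [dotProduct_add, dotProduct_add, e1, e4]
      ring
    have eS : x ⬝ᵥ (schurElimS LGhat) *ᵥ x
        = x ⬝ᵥ LGhat.toBlocks₁₁ *ᵥ x - v ⬝ᵥ (N *ᵥ v) := by
      show x ⬝ᵥ (LGhat.toBlocks₁₁ -
        LGhat.toBlocks₁₂ * LGhat.toBlocks₂₂⁻¹ * LGhat.toBlocks₂₁) *ᵥ x = _
      rw [hDinv, Matrix.sub_mulVec, dotProduct_sub, e2]
    have eZ : z ⬝ᵥ LGhat.toBlocks₂₂ *ᵥ z = y ⬝ᵥ LGhat.toBlocks₂₂ *ᵥ y + y ⬝ᵥ v + y ⬝ᵥ v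
        + v ⬝ᵥ (N *ᵥ v) := by
      have f1 : (N *ᵥ v) ⬝ᵥ LGhat.toBlocks₂₂ *ᵥ y = y ⬝ᵥ v := by
        rw [hDsym, hDNv]
      conv_lhs => rw [hz_def]
      rw [Matrix.mulVec_add, hDNv, dotProduct_add, add_dotProduct, add_dotProduct, f1,
        dotProduct_comm (N *ᵥ v) v]
      ring
    have hXS : X ⬝ᵥ LGhat *ᵥ X =
        x ⬝ᵥ (schurElimS LGhat) *ᵥ x + z ⬝ᵥ LGhat.toBlocks₂₂ *ᵥ z := by
      rw [eL, eS, eZ]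
      ring
    have hfinal : x ⬝ᵥ (LG - schurElimS LGhat) *ᵥ x = z ⬝ᵥ LGhat.toBlocks₂₂ *ᵥ z := by
      rw [Matrix.sub_mulVec, dotProduct_sub]
      have := hXS
      rw [hXL] at this
      linarith
    rw [hfinal]
    exact hDpsd z
  · -- entry bound
    intro i
    have hNcol : ∀ l, (∑ j, N j l) = (d l)⁻¹ / c := by
      intro l
      simp only [hN_def, Matrix.of_apply]
      rw [Finset.sum_add_distrib, Finset.sum_ite_eq']
      simp only [Finset.mem_univ, if_true]
      have hpull : ∑ j, W / c * ((d j)⁻¹ * (d l)⁻¹) = W / c * ((∑ j, (d j)⁻¹) * (d l)⁻¹) := by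
        rw [← Finset.mul_sum, ← Finset.sum_mul]
      rw [hpull, hsumd]
      exact aux_col (d l) c W (hdne l) hcne hWne
    have hSentry : schurElimS LGhat (Sum.inr ()) (Sum.inl i) =
        LGhat.toBlocks₁₁ (Sum.inr ()) (Sum.inl i) -
          (LGhat.toBlocks₁₂ * LGhat.toBlocks₂₂⁻¹ * LGhat.toBlocks₂₁) (Sum.inr ()) (Sum.inl i) :=
      rfl
    rw [hSentry, hDinv, hAu i]
    have hmul : (LGhat.toBlocks₁₂ * N * LGhat.toBlocks₂₁) (Sum.inr ()) (Sum.inl i)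
        = ∑ l, (-W * ((d l)⁻¹ / c)) * (-(if σ i = Sum.inr l then w i else 0)) := by
      rw [Matrix.mul_apply]
      refine Finset.sum_congr rfl fun l _ => ?_
      rw [Matrix.mul_apply, hBt, hBv]
      congr 1
      rw [Finset.sum_congr rfl fun j (_ : j ∈ Finset.univ) => by rw [hBu j],
        ← Finset.mul_sum, hNcol]
    rw [hmul]
    rcases hσ : σ i with u | j0
    · have hz : ∑ l, (-W * ((d l)⁻¹ / c)) *
          (-(if (Sum.inl u : Unit ⊕ Fin k) = Sum.inr l then w i else 0)) = 0 :=
        Finset.sum_eq_zero fun l _ => by simp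
      rw [hz]
      have hif : (if (Sum.inl u : Unit ⊕ Fin k) = Sum.inl () then w i else 0) = w i := by simp
      rw [hif]
      nlinarith [hw i, hδ]
    · have hsum : ∑ l, (-W * ((d l)⁻¹ / c)) *
          (-(if (Sum.inr j0 : Unit ⊕ Fin k) = Sum.inr l then w i else 0))
          = W * ((d j0)⁻¹ / c) * w i := by
        rw [Finset.sum_eq_single_of_mem j0 (Finset.mem_univ j0)]
        · rw [if_pos rfl]; ring
        · intro l _ hl
          rw [if_neg (by simpa using Ne.symm hl)]
          ring
      rw [hsum]
      have hif : (if (Sum.inr j0 : Unit ⊕ Fin k) = Sum.inl () then w i else 0) = 0 := by simp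
      rw [hif]
      have h1 : W * ((d j0)⁻¹ / c) = W / (c * d j0) :=
        aux_div (d j0) c W (hdne j0) hcne
      have h2 : W / ((1+δ) * W) ≤ W / (c * d j0) :=
        div_le_div_of_nonneg_left hW.le (mul_pos hcpos (hdpos j0)) (hcd j0)
      have h3 : W / ((1+δ) * W) = 1 / (1+δ) :=
        aux_WW W (1+δ) hWne (ne_of_gt (by linarith : (0:ℝ) < 1+δ))
      have h4 : 1 - 2*δ ≤ 1 / (1+δ) := by
        rw [le_div_iff₀ (by linarith : (0:ℝ) < 1+δ)]
        nlinarith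
      nlinarith [hw i]
end
end
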